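/- arXiv:2601.18440 — 8 statements merged into one kernel-verified Lean document; each statement's English description precedes it below -/
import Mathlib

section
/- Let [0:N-1] be partitioned into M disjoint sets P_1,...,P_M with |P_i| = N_i, and let T_i ≤ N_i for each i. Define F to be the union of (Type 1) sets S with |S ∩ P_i| ≥ T_i + 1 for some i, and (Type 2) sets S with |S ∩ P_j| ≥ T_j and |S ∩ P_k| ≥ T_k for some j ≠ k. Then the hitting number of F equals Σ_{i=1}^M (N_i - T_i) + (M - 1). -/
/-- For a partition of `[0:N-1]` into `M` disjoint groups `P i` of sizes `Nc i`, with
thresholds `T i ≤ Nc i`, the hitting number of the family consisting of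
Type 1 sets (`|S ∩ P i| ≥ T i + 1` for some `i`) and Type 2 sets
(`|S ∩ P j| ≥ T j` and `|S ∩ P k| ≥ T k` for some `j ≠ k`) equals
`Σ_i (Nc i - T i) + (M - 1)`. -/
theorem hitting_number_disjoint_collusion (N M : ℕ) (hM : 2 ≤ M)
    (P : Fin M → Finset (Fin N)) (Nc T : Fin M → ℕ)
    (hdisj : ∀ i j : Fin M, i ≠ j → Disjoint (P i) (P j))
    (hcover : Finset.univ.biUnion P = (Finset.univ : Finset (Fin N)))
    (hcard : ∀ i, (P i).card = Nc i)
    (hT1 : ∀ i, 1 ≤ T i) (hTN : ∀ i, T i ≤ Nc i) :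
    IsLeast {k : ℕ | ∃ H : Finset (Fin N), H.card = k ∧
      ∀ S : Finset (Fin N),
        ((∃ i, T i + 1 ≤ (S ∩ P i).card) ∨
         (∃ j k, j ≠ k ∧ T j ≤ (S ∩ P j).card ∧ T k ≤ (S ∩ P k).card)) →
        (S ∩ H).Nonempty}
      (∑ i, (Nc i - T i) + (M - 1)) := by
  classical
  have hMpos : 0 < M := by omega
  set i0 : Fin M := ⟨0, hMpos⟩ with hi0
  constructor
  · -- membership: construct a hitting set of the right size
    have hchoice : ∀ i : Fin M,
        ∃ t ⊆ P i, t.card = Nc i - T i + (if i = i0 then 0 else 1) := by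
      intro i
      apply Finset.exists_subset_card_eq
      rw [hcard i]
      have := hT1 i; have := hTN i
      split <;> omega
    choose Hs hHsub hHcard using hchoice
    refine ⟨Finset.univ.biUnion Hs, ?_, ?_⟩
    · rw [Finset.card_biUnion (fun a _ b _ hab =>
        (hdisj a b hab).mono (hHsub a) (hHsub b))]
      have h1 : ∑ i : Fin M, (if i = i0 then (1:ℕ) else 0) = 1 := by
        simp
      have h2 : ∑ i : Fin M, (if i = i0 then (0:ℕ) else 1) = M - 1 := by
        have h3 : ∑ i : Fin M,
            ((if i = i0 then (0:ℕ) else 1) + (if i = i0 then 1 else 0)) = M := by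
          have : ∀ i : Fin M,
              ((if i = i0 then (0:ℕ) else 1) + (if i = i0 then 1 else 0)) = 1 := by
            intro i; split <;> rfl
          simp [this, Finset.card_univ]
        rw [Finset.sum_add_distrib, h1] at h3
        omega
      calc ∑ i, (Hs i).card = ∑ i, (Nc i - T i + (if i = i0 then 0 else 1)) := by
            exact Finset.sum_congr rfl (fun i _ => hHcard i)
        _ = ∑ i, (Nc i - T i) + (M - 1) := by
            rw [Finset.sum_add_distrib, h2]
    · intro S hS
      by_contra hne
      rw [Finset.not_nonempty_iff_eq_empty] at hne
      have key : ∀ i : Fin M,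
          (S ∩ P i).card ≤ T i - (if i = i0 then 0 else 1) := by
        intro i
        have hsub : S ∩ P i ⊆ P i \ Hs i := by
          intro x hx
          simp only [Finset.mem_inter] at hx
          refine Finset.mem_sdiff.mpr ⟨hx.2, fun hxH => ?_⟩
          have hmem : x ∈ S ∩ Finset.univ.biUnion Hs :=
            Finset.mem_inter.mpr ⟨hx.1,
              Finset.mem_biUnion.mpr ⟨i, Finset.mem_univ i, hxH⟩⟩
          rw [hne] at hmem
          exact absurd hmem (Finset.notMem_empty x)
        have hle := Finset.card_le_card hsub
        rw [Finset.card_sdiff_of_subset (hHsub i), hcard i, hHcard i] at hle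
        have := hT1 i; have := hTN i
        by_cases hii : i = i0 <;> simp only [hii, if_pos, if_neg, if_true, if_false] at hle ⊢ <;> omega
      rcases hS with ⟨i, hi⟩ | ⟨j, k, hjk, hj, hk⟩
      · have := key i; have := hT1 i
        by_cases hii : i = i0 <;> simp [hii] at * <;> omega
      · have hkj := key j; have hkk := key k
        have := hT1 j; have := hT1 k
        by_cases hjj : j = i0
        · have hkk' : k ≠ i0 := fun h => hjk (hjj.trans h.symm)
          simp [hkk'] at hkk; omega
        · simp [hjj] at hkj; omega
  · -- lower bound
    rintro k ⟨H, hHcard', hhit⟩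
    set hw : Fin M → ℕ := fun i => (H ∩ P i).card with hhw
    have hsum : ∑ i, hw i = k := by
      rw [← hHcard']
      have hHe : H = Finset.univ.biUnion (fun i => H ∩ P i) := by
        ext x
        simp only [Finset.mem_biUnion, Finset.mem_inter, Finset.mem_univ, true_and]
        constructor
        · intro hx
          have hx2 : x ∈ Finset.univ.biUnion P := by
            rw [hcover]; exact Finset.mem_univ x
          obtain ⟨i, _, hi⟩ := Finset.mem_biUnion.mp hx2
          exact ⟨i, hx, hi⟩
        · rintro ⟨i, hx, _⟩; exact hx
      conv_rhs => rw [hHe]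
      rw [Finset.card_biUnion (fun a _ b _ hab =>
        (hdisj a b hab).mono Finset.inter_subset_right Finset.inter_subset_right)]
    have hPcard : ∀ i, (P i \ H).card = Nc i - hw i := by
      intro i
      have h1 := Finset.card_sdiff_add_card_inter (P i) H
      have h2 : (P i ∩ H).card = hw i := by rw [Finset.inter_comm]
      have h3 := hcard i
      omega
    have claim1 : ∀ i, Nc i - T i ≤ hw i := by
      intro i
      by_contra hc
      push_neg at hc
      have hhi := hhit (P i \ H) (Or.inl ⟨i, by
        have hsub : P i \ H ⊆ (P i \ H) ∩ P i :=
          fun x hx => Finset.mem_inter.mpr ⟨hx, (Finset.mem_sdiff.mp hx).1⟩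
        have := Finset.card_le_card hsub
        have := hPcard i
        have := hTN i
        omega⟩)
      rw [Finset.sdiff_inter_self] at hhi
      exact Finset.not_nonempty_empty hhi
    have claim2 : ∀ j k : Fin M, j ≠ k →
        hw j ≤ Nc j - T j → hw k ≤ Nc k - T k → False := by
      intro j k hjk hj hk
      have hhi := hhit ((P j ∪ P k) \ H) (Or.inr ⟨j, k, hjk, ?_, ?_⟩)
      · rw [Finset.sdiff_inter_self] at hhi
        exact Finset.not_nonempty_empty hhi
      · have hsub : P j \ H ⊆ ((P j ∪ P k) \ H) ∩ P j := by
          intro x hx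
          rcases Finset.mem_sdiff.mp hx with ⟨h1, h2⟩
          exact Finset.mem_inter.mpr
            ⟨Finset.mem_sdiff.mpr ⟨Finset.mem_union_left _ h1, h2⟩, h1⟩
        have := Finset.card_le_card hsub
        have := hPcard j
        have := hTN j
        omega
      · have hsub : P k \ H ⊆ ((P j ∪ P k) \ H) ∩ P k := by
          intro x hx
          rcases Finset.mem_sdiff.mp hx with ⟨h1, h2⟩
          exact Finset.mem_inter.mpr
            ⟨Finset.mem_sdiff.mpr ⟨Finset.mem_union_right _ h1, h2⟩, h1⟩
        have := Finset.card_le_card hsub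
        have := hPcard k
        have := hTN k
        omega
    have hBle : (Finset.univ.filter (fun i => hw i ≤ Nc i - T i)).card ≤ 1 := by
      apply Finset.card_le_one.mpr
      intro a ha b hb
      simp only [Finset.mem_filter] at ha hb
      by_contra hab
      exact claim2 a b hab ha.2 hb.2
    have hsplit := Finset.sum_filter_add_sum_filter_not Finset.univ
      (fun i => hw i ≤ Nc i - T i) hw
    have hsplit2 := Finset.sum_filter_add_sum_filter_not Finset.univ
      (fun i => hw i ≤ Nc i - T i) (fun i => Nc i - T i)
    have hcardsplit : (Finset.univ.filter (fun i => hw i ≤ Nc i - T i)).card +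
        (Finset.univ.filter (fun i => ¬ hw i ≤ Nc i - T i)).card = M := by
      rw [Finset.card_filter_add_card_filter_not, Finset.card_univ,
        Fintype.card_fin]
    have hlb1 : ∑ i ∈ Finset.univ.filter (fun i => hw i ≤ Nc i - T i), (Nc i - T i)
        ≤ ∑ i ∈ Finset.univ.filter (fun i => hw i ≤ Nc i - T i), hw i :=
      Finset.sum_le_sum (fun i _ => claim1 i)
    have hlb2 : ∑ i ∈ Finset.univ.filter (fun i => ¬ hw i ≤ Nc i - T i),
        ((Nc i - T i) + 1) ≤
        ∑ i ∈ Finset.univ.filter (fun i => ¬ hw i ≤ Nc i - T i), hw i := by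
      apply Finset.sum_le_sum
      intro i hi
      simp only [Finset.mem_filter] at hi
      omega
    rw [Finset.sum_add_distrib, Finset.sum_const, smul_eq_mul, mul_one] at hlb2
    omega
end

section
/- For the cyclically T-contiguous collusion pattern on N servers with N ≥ 2T, the family F(P) defined as the sets S ⊆ [0:N-1] containing some colluding set T_m such that for every i ∈ T_m there exists a colluding set contained in S \ {i}, coincides with the family of sets S containing two disjoint colluding sets, i.e., F(P) = {S : ∃ T_1, T_2 ∈ P, T_1 ∪ T_2 ⊆ S, T_1 ∩ T_2 = ∅}. -/
def cycInt (N T : ℕ) (j : ZMod N) : Finset (ZMod N) :=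
  (Finset.range T).image (fun t : ℕ => j + (t : ZMod N))

lemma mem_cycInt_iff {N T : ℕ} (hN : 0 < N) (hTN : T ≤ N) (j x : ZMod N) :
    x ∈ cycInt N T j ↔ (x - j).val < T := by
  haveI : NeZero N := ⟨hN.ne'⟩
  simp only [cycInt, Finset.mem_image, Finset.mem_range]
  constructor
  · rintro ⟨t, ht, rfl⟩
    rw [add_sub_cancel_left, ZMod.val_natCast_of_lt (lt_of_lt_of_le ht hTN)]
    exact ht
  · intro h
    exact ⟨(x - j).val, h, by rw [ZMod.natCast_val, ZMod.cast_id]; ring⟩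

lemma disjoint_cycInt {N T : ℕ} (hN : 0 < N) (hTN : T ≤ N) (j k : ZMod N)
    (h1 : T ≤ (k - j).val) (h2 : (k - j).val ≤ N - T) :
    Disjoint (cycInt N T j) (cycInt N T k) := by
  haveI : NeZero N := ⟨hN.ne'⟩
  rw [Finset.disjoint_left]
  intro x hxj hxk
  rw [mem_cycInt_iff hN hTN] at hxj hxk
  have key : (x - j) = (x - k) + (k - j) := by ring
  have hval : (x - j).val = ((x - k).val + (k - j).val) % N := by
    rw [key, ZMod.val_add]
  rw [Nat.mod_eq_of_lt (by omega)] at hval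
  omega

/-- For the cyclically `T`-contiguous collusion pattern on `N ≥ 2T` servers, the family
`F(P)` (sets `S` containing a colluding set `T_m` such that for every `i ∈ T_m` some
colluding set is contained in `S \ {i}`) coincides with the family of sets containing two
disjoint colluding sets. -/
theorem family_eq_two_disjoint_intervals (N T : ℕ) (hT : 1 ≤ T) (hN : 2 * T ≤ N) :
    {S : Finset (ZMod N) | ∃ j : ZMod N, cycInt N T j ⊆ S ∧
        ∀ i ∈ cycInt N T j, ∃ r : ZMod N, cycInt N T r ⊆ S.erase i} =
    {S : Finset (ZMod N) | ∃ j k : ZMod N,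
        cycInt N T j ∪ cycInt N T k ⊆ S ∧
        Disjoint (cycInt N T j) (cycInt N T k)} := by
  have hN0 : 0 < N := by omega
  haveI : NeZero N := ⟨hN0.ne'⟩
  have hTN : T ≤ N := by omega
  ext S
  simp only [Set.mem_setOf_eq]
  constructor
  · rintro ⟨j, hjS, hprop⟩
    set B := (Finset.range T).filter (fun m : ℕ => cycInt N T (j + (m : ZMod N)) ⊆ S) with hB
    have h0B : (0 : ℕ) ∈ B := by
      rw [hB, Finset.mem_filter, Finset.mem_range]
      exact ⟨hT, by simpa using hjS⟩
    set M := B.max' ⟨0, h0B⟩ with hMdef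
    have hMB : M ∈ B := Finset.max'_mem _ _
    rw [hB, Finset.mem_filter, Finset.mem_range] at hMB
    obtain ⟨hMT, hMS⟩ := hMB
    set i₀ : ZMod N := j + (M : ZMod N) with hi₀def
    have hi₀ : i₀ ∈ cycInt N T j := by
      rw [mem_cycInt_iff hN0 hTN, hi₀def, add_sub_cancel_left,
        ZMod.val_natCast_of_lt (lt_of_lt_of_le hMT hTN)]
      exact hMT
    obtain ⟨r, hr⟩ := hprop i₀ hi₀
    have hrS : cycInt N T r ⊆ S := hr.trans (Finset.erase_subset _ _)
    have hi₀r : i₀ ∉ cycInt N T r := fun h => Finset.notMem_erase i₀ S (hr h)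
    set d := (r - j).val with hddef
    have hdN : d < N := ZMod.val_lt _
    have hrj : r = j + (d : ZMod N) := by
      rw [hddef, ZMod.natCast_val, ZMod.cast_id]; ring
    rcases lt_or_ge d T with hd | hd
    · -- d < T : contradiction with maximality
      have hdB : d ∈ B := by
        rw [hB, Finset.mem_filter, Finset.mem_range]
        exact ⟨hd, by rw [← hrj]; exact hrS⟩
      have hdM : d ≤ M := Finset.le_max' _ _ hdB
      exact absurd (by
        rw [mem_cycInt_iff hN0 hTN, hi₀def, hrj,
          show j + (M : ZMod N) - (j + (d : ZMod N)) = ((M - d : ℕ) : ZMod N) by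
            rw [Nat.cast_sub hdM]; ring,
          ZMod.val_natCast_of_lt (by omega)]
        omega) hi₀r
    rcases le_or_gt d (N - T) with hd2 | hd2
    · -- middle range : I_j and I_r disjoint
      exact ⟨j, r, Finset.union_subset hjS hrS,
        disjoint_cycInt hN0 hTN j r (by rw [← hddef]; exact hd) (by rw [← hddef]; exact hd2)⟩
    · -- d > N - T : wrap-around case
      have hval : (i₀ - r).val = M + (N - d) := by
        rw [hi₀def, hrj,
          show j + (M : ZMod N) - (j + (d : ZMod N)) = ((M + (N - d) : ℕ) : ZMod N) by
            push_cast [Nat.cast_sub hdN.le]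
            rw [ZMod.natCast_self]; ring,
          ZMod.val_natCast_of_lt (by omega)]
      have hkey : T ≤ M + (N - d) := by
        by_contra hcon
        exact hi₀r (by rw [mem_cycInt_iff hN0 hTN, hval]; omega)
      -- arc membership: every offset o < M + T gives j + o ∈ S
      have harc : ∀ o : ℕ, o < M + T → j + (o : ZMod N) ∈ S := by
        intro o ho
        rcases lt_or_ge o T with hoT | hoT
        · exact hjS (by rw [mem_cycInt_iff hN0 hTN, add_sub_cancel_left,
            ZMod.val_natCast_of_lt (lt_of_lt_of_le hoT hTN)]; exact hoT)
        · refine hMS ?_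
          rw [mem_cycInt_iff hN0 hTN,
            show j + (o : ZMod N) - (j + (M : ZMod N)) = ((o - M : ℕ) : ZMod N) by
              rw [Nat.cast_sub (by omega)]; ring,
            ZMod.val_natCast_of_lt (by omega)]
          omega
      refine ⟨r, r + (T : ZMod N), Finset.union_subset hrS ?_, ?_⟩
      · -- cycInt (r+T) ⊆ S
        intro x hx
        rw [mem_cycInt_iff hN0 hTN] at hx
        set t := (x - (r + (T : ZMod N))).val with htdef
        have hxeq : x = r + (T : ZMod N) + (t : ZMod N) := by
          rw [htdef, ZMod.natCast_val, ZMod.cast_id]; ring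
        have h1 : x = j + ((d + T + t : ℕ) : ZMod N) := by
          rw [hxeq, hrj]; push_cast; ring
        have h2 : ((d + T + t : ℕ) : ZMod N) = ((d + T + t - N : ℕ) : ZMod N) := by
          conv_lhs => rw [show d + T + t = (d + T + t - N) + N by omega]
          push_cast [ZMod.natCast_self]; ring
        have h3 : d + T + t - N < M + T := by omega
        rw [h1, h2]
        exact harc _ h3
      · -- disjoint
        refine disjoint_cycInt hN0 hTN r (r + (T : ZMod N)) ?_ ?_ <;>
          rw [add_sub_cancel_left, ZMod.val_natCast_of_lt (by omega)]
        · omega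
  · rintro ⟨j, k, hsub, hdisj⟩
    refine ⟨j, fun x hx => hsub (Finset.mem_union_left _ hx), fun i hi => ⟨k, fun x hx => ?_⟩⟩
    rw [Finset.mem_erase]
    refine ⟨fun hxi => ?_, hsub (Finset.mem_union_right _ hx)⟩
    subst hxi
    exact Finset.disjoint_left.mp hdisj hi hx
end

section
/- For the cyclically T-contiguous collusion pattern on N servers (T ≥ 1, N > T), the hitting number of the family F = {S ⊆ Z_N : S contains two disjoint cyclic intervals of length T} equals ⌈N/T⌉ - 1. -/
section Aux

variable {N T : ℕ}

lemma aux_val_sub_natCast [NeZero N] (z : ZMod N) (a : ℕ) (ha : a < N) :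
    (z - (a : ZMod N)).val = if a ≤ z.val then z.val - a else z.val + N - a := by
  have hz : z.val < N := ZMod.val_lt z
  have hrw : z - (a : ZMod N) = ((z.val + (N - a) : ℕ) : ZMod N) := by
    push_cast [Nat.cast_sub ha.le]
    rw [ZMod.natCast_val, ZMod.cast_id, ZMod.natCast_self]
    ring
  rw [hrw, ZMod.val_natCast]
  rcases le_or_gt a z.val with h | h
  · rw [if_pos h, Nat.mod_eq_sub_mod (by omega), Nat.mod_eq_of_lt (by omega)]
    omega
  · rw [if_neg (by omega), Nat.mod_eq_of_lt (by omega)]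
    omega

lemma aux_val_natCast_sub [NeZero N] (a : ℕ) (ha : a < N) (z : ZMod N) :
    ((a : ZMod N) - z).val = if z.val ≤ a then a - z.val else a + N - z.val := by
  have h1 : ((z.val : ℕ) : ZMod N) = z := by rw [ZMod.natCast_val, ZMod.cast_id]
  have h2 := aux_val_sub_natCast ((a : ℕ) : ZMod N) z.val (ZMod.val_lt z)
  rw [h1] at h2
  rw [h2, ZMod.val_natCast, Nat.mod_eq_of_lt ha]

lemma aux_mem_cycInt [NeZero N] (hTN : T ≤ N) (j z : ZMod N) :
    z ∈ cycInt N T j ↔ (z - j).val < T := by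
  simp only [cycInt, Finset.mem_image, Finset.mem_range]
  constructor
  · rintro ⟨t, ht, rfl⟩
    have h1 : (j + (t : ZMod N)) - j = (t : ZMod N) := by ring
    rw [h1, ZMod.val_natCast, Nat.mod_eq_of_lt (by omega)]
    exact ht
  · intro h
    refine ⟨(z - j).val, h, ?_⟩
    rw [ZMod.natCast_val, ZMod.cast_id]
    ring

end Aux

/-- For the cyclically `T`-contiguous collusion pattern on `N` servers with `N ≥ 2T`,
the hitting number of the family of sets containing two disjoint cyclic intervals of
length `T` equals `⌈N/T⌉ - 1`. -/
theorem hitting_number_cyclic_contiguous (N T : ℕ) (hT : 1 ≤ T) (hN : 2 * T ≤ N) :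
    IsLeast {k : ℕ | ∃ H : Finset (ZMod N), H.card = k ∧
      ∀ S : Finset (ZMod N),
        (∃ j j' : ZMod N, Disjoint (cycInt N T j) (cycInt N T j') ∧
          cycInt N T j ∪ cycInt N T j' ⊆ S) → (S ∩ H).Nonempty}
      (⌈(N : ℚ) / (T : ℚ)⌉₊ - 1) := by
  haveI : NeZero N := ⟨by omega⟩
  have hTpos : 0 < T := hT
  have hTN : T ≤ N := by omega
  have hdm := Nat.div_add_mod (N + T - 1) T
  have hmod : (N + T - 1) % T < T := Nat.mod_lt _ hTpos
  set c : ℕ := (N + T - 1) / T with hc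
  have hcomm : c * T = T * c := Nat.mul_comm c T
  have hcT_ge : N ≤ c * T := by omega
  have hcT_le : c * T ≤ N + T - 1 := by omega
  have hc2 : 2 ≤ c := by
    rw [hc, Nat.le_div_iff_mul_le hTpos]
    omega
  have hceil : ⌈(N : ℚ) / (T : ℚ)⌉₊ = c := by
    rw [Nat.ceil_eq_iff (by omega)]
    constructor
    · rw [lt_div_iff₀ (by exact_mod_cast hTpos)]
      have h3 : (c - 1) * T < N := by
        have h1 : (c - 1) * T = c * T - T := by rw [Nat.sub_one_mul]
        omega
      exact_mod_cast h3
    · rw [div_le_iff₀ (by exact_mod_cast hTpos)]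
      exact_mod_cast hcT_ge
  rw [hceil]
  set M : ℕ := c - 1 with hM
  have hM1 : 1 ≤ M := by omega
  have hMT_lt : M * T < N := by
    have h1 : M * T = c * T - T := by rw [hM, Nat.sub_one_mul]
    omega
  have hNMT : N ≤ (M + 1) * T := by
    have h2 : M + 1 = c := by omega
    rw [h2]; exact hcT_ge
  have hM1T : (M - 1) * T + T = M * T := by
    rw [Nat.sub_one_mul]
    have h3 : T ≤ M * T := Nat.le_mul_of_pos_left T hM1
    omega
  -- key lemma: an interval avoiding all points `i*T` (`i < M`) has a pinned-down start
  have avoid : ∀ j : ZMod N,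
      (∀ i, i < M → ((i * T : ℕ) : ZMod N) ∉ cycInt N T j) →
      (M - 1) * T + 1 ≤ j.val ∧ j.val ≤ M * T ∧ j.val + T ≤ N := by
    intro j hj
    have hv : j.val < N := ZMod.val_lt j
    have hmem : ∀ i, i < M →
        ¬ ((if j.val ≤ i * T then i * T - j.val else i * T + N - j.val) < T) := by
      intro i hi hlt
      have hiT : i * T < N := lt_trans ((Nat.mul_lt_mul_right hTpos).mpr hi) hMT_lt
      exact hj i hi ((aux_mem_cycInt hTN j _).mpr
        (by rw [aux_val_natCast_sub (i * T) hiT j]; exact hlt))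
    have h0 := hmem 0 hM1
    rw [Nat.zero_mul] at h0
    have hwrap : 1 ≤ j.val ∧ j.val + T ≤ N := by
      split_ifs at h0 <;> omega
    -- the multiple of T inside the interval
    have hdm' := Nat.div_add_mod (j.val + T - 1) T
    have hmod' : (j.val + T - 1) % T < T := Nat.mod_lt _ hTpos
    set c' : ℕ := (j.val + T - 1) / T with hc'
    have hcomm' : c' * T = T * c' := Nat.mul_comm c' T
    have hge : j.val ≤ c' * T := by omega
    have hle : c' * T ≤ j.val + T - 1 := by omega
    have hMc : M ≤ c' := by
      by_contra hcon
      push_neg at hcon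
      exact hmem c' hcon (by rw [if_pos hge]; omega)
    have hcM : c' ≤ M := by
      by_contra hcon
      push_neg at hcon
      have : (M + 1) * T ≤ c' * T := Nat.mul_le_mul_right T hcon
      omega
    have hcc : c' = M := le_antisymm hcM hMc
    rw [hcc] at hge hle
    omega
  constructor
  · -- membership: the hitting set {0, T, 2T, ..., (M-1)T}
    refine ⟨(Finset.range M).image (fun i : ℕ => ((i * T : ℕ) : ZMod N)), ?_, ?_⟩
    · rw [Finset.card_image_of_injOn, Finset.card_range]
      intro i hi i' hi' heq
      rw [Finset.mem_coe, Finset.mem_range] at hi hi'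
      have h1 : i * T < N := lt_trans ((Nat.mul_lt_mul_right hTpos).mpr hi) hMT_lt
      have h2 : i' * T < N := lt_trans ((Nat.mul_lt_mul_right hTpos).mpr hi') hMT_lt
      have := congrArg ZMod.val heq
      rw [ZMod.val_natCast, ZMod.val_natCast, Nat.mod_eq_of_lt h1, Nat.mod_eq_of_lt h2] at this
      exact Nat.eq_of_mul_eq_mul_right hTpos this
    · rintro S ⟨j, j', hdisj, hsub⟩
      by_contra hne
      rw [Finset.not_nonempty_iff_eq_empty, Finset.eq_empty_iff_forall_notMem] at hne
      have havj : ∀ i, i < M → ((i * T : ℕ) : ZMod N) ∉ cycInt N T j := by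
        intro i hi hmem
        exact hne _ (Finset.mem_inter.mpr ⟨hsub (Finset.mem_union_left _ hmem),
          Finset.mem_image_of_mem _ (Finset.mem_range.mpr hi)⟩)
      have havj' : ∀ i, i < M → ((i * T : ℕ) : ZMod N) ∉ cycInt N T j' := by
        intro i hi hmem
        exact hne _ (Finset.mem_inter.mpr ⟨hsub (Finset.mem_union_right _ hmem),
          Finset.mem_image_of_mem _ (Finset.mem_range.mpr hi)⟩)
      obtain ⟨ha1, ha2, ha3⟩ := avoid j havj
      obtain ⟨hb1, hb2, hb3⟩ := avoid j' havj'
      -- both starts are in the same small window: intervals overlap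
      have key : ∀ a b : ZMod N, a.val ≤ b.val → (M - 1) * T + 1 ≤ a.val → b.val ≤ M * T →
          b ∈ cycInt N T a := by
        intro a b hab h1 h2
        rw [aux_mem_cycInt hTN]
        have hcast : ((a.val : ℕ) : ZMod N) = a := by rw [ZMod.natCast_val, ZMod.cast_id]
        have h4 := aux_val_sub_natCast b a.val (ZMod.val_lt a)
        rw [hcast] at h4
        rw [h4, if_pos hab]
        omega
      have hself : ∀ a : ZMod N, a ∈ cycInt N T a := by
        intro a
        rw [aux_mem_cycInt hTN, sub_self, ZMod.val_zero]
        omega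
      rcases le_total j.val j'.val with hor | hor
      · exact Finset.disjoint_left.mp hdisj (key j j' hor ha1 hb2) (hself j')
      · exact Finset.disjoint_left.mp hdisj (hself j) (key j' j hor hb1 ha2)
  · -- lower bound
    rintro k ⟨H, hcard, hhit⟩
    by_contra hlt
    push_neg at hlt
    have hkT : (k + 1) * T < N :=
      lt_of_le_of_lt (Nat.mul_le_mul_right T hlt) hMT_lt
    have hsk : (k + 1) * T = k * T + T := Nat.add_one_mul _ _
    rcases H.eq_empty_or_nonempty with hHe | ⟨h, hh⟩
    · -- empty hitting set: the two basic intervals give a contradiction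
      have hdisj : Disjoint (cycInt N T (0 : ZMod N)) (cycInt N T ((T : ℕ) : ZMod N)) := by
        rw [Finset.disjoint_left]
        intro z hz0 hzT
        rw [aux_mem_cycInt hTN, sub_zero] at hz0
        rw [aux_mem_cycInt hTN, aux_val_sub_natCast z T (by omega)] at hzT
        split_ifs at hzT <;> omega
      obtain ⟨x, hx⟩ := hhit _ ⟨0, ((T : ℕ) : ZMod N), hdisj, subset_rfl⟩
      rw [hHe, Finset.inter_empty] at hx
      exact absurd hx (Finset.notMem_empty x)
    · -- nonempty hitting set: shift so that h sits just before position 0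
      have hmemA : ∀ i : ℕ, i ≤ k → ∀ z : ZMod N,
          z ∈ cycInt N T (h + ((1 + i * T : ℕ) : ZMod N)) ↔
            1 + i * T ≤ (z - h).val ∧ (z - h).val ≤ (i + 1) * T := by
        intro i hi z
        have hik : i * T ≤ k * T := Nat.mul_le_mul_right T hi
        have hsi : (i + 1) * T = i * T + T := Nat.add_one_mul _ _
        have ha : 1 + i * T < N := by omega
        have hd : (z - h).val < N := ZMod.val_lt _
        rw [aux_mem_cycInt hTN]
        have hrw : z - (h + ((1 + i * T : ℕ) : ZMod N)) =
            (z - h) - ((1 + i * T : ℕ) : ZMod N) := by ring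
        rw [hrw, aux_val_sub_natCast (z - h) (1 + i * T) ha]
        split_ifs with hcase
        · omega
        · constructor
          · intro hlt2; omega
          · rintro ⟨h1, _⟩; omega
      set g : ZMod N → ℕ := fun x => ((x - h).val - 1) / T with hg
      set B : Finset ℕ := (H.erase h).image g with hB
      have hk1 : 1 ≤ k := by
        rw [← hcard]; exact Finset.card_pos.mpr ⟨h, hh⟩
      have hBcard : B.card ≤ k - 1 := by
        refine le_trans Finset.card_image_le ?_
        rw [Finset.card_erase_of_mem hh, hcard]
      set Good : Finset ℕ := Finset.range (k + 1) \ B with hGood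
      have h2good : 1 < Good.card := by
        have h5 : (Finset.range (k + 1)).card - B.card ≤ Good.card :=
          Finset.le_card_sdiff B (Finset.range (k + 1))
        rw [Finset.card_range] at h5
        omega
      obtain ⟨i, hiG, i', hi'G, hne⟩ := Finset.one_lt_card.mp h2good
      obtain ⟨hir, hiB⟩ := Finset.mem_sdiff.mp hiG
      obtain ⟨hi'r, hi'B⟩ := Finset.mem_sdiff.mp hi'G
      have hik : i ≤ k := Nat.lt_succ_iff.mp (Finset.mem_range.mp hir)
      have hi'k : i' ≤ k := Nat.lt_succ_iff.mp (Finset.mem_range.mp hi'r)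
      -- intervals indexed by Good avoid H
      have hgood : ∀ i₀ : ℕ, i₀ ≤ k → i₀ ∉ B → ∀ x ∈ H,
          x ∉ cycInt N T (h + ((1 + i₀ * T : ℕ) : ZMod N)) := by
        intro i₀ hi₀k hi₀B x hx hmem
        obtain ⟨hd1, hd2⟩ := (hmemA i₀ hi₀k x).mp hmem
        have hxh : x ≠ h := by
          intro he
          rw [he, sub_self, ZMod.val_zero] at hd1
          omega
        apply hi₀B
        refine Finset.mem_image.mpr ⟨x, Finset.mem_erase.mpr ⟨hxh, hx⟩, ?_⟩
        show ((x - h).val - 1) / T = i₀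
        have hsi : (i₀ + 1) * T = i₀ * T + T := Nat.add_one_mul _ _
        exact Nat.div_eq_of_lt_le (by omega) (by rw [Nat.succ_mul]; omega)
      -- the two good intervals are disjoint
      have hdisj : Disjoint (cycInt N T (h + ((1 + i * T : ℕ) : ZMod N)))
          (cycInt N T (h + ((1 + i' * T : ℕ) : ZMod N))) := by
        rw [Finset.disjoint_left]
        intro z hz1 hz2
        obtain ⟨h1, h2⟩ := (hmemA i hik z).mp hz1
        obtain ⟨h3, h4⟩ := (hmemA i' hi'k z).mp hz2
        have hsi : (i + 1) * T = i * T + T := Nat.add_one_mul _ _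
        have hsi' : (i' + 1) * T = i' * T + T := Nat.add_one_mul _ _
        rcases lt_or_gt_of_ne hne with hlt2 | hlt2
        · have : (i + 1) * T ≤ i' * T := Nat.mul_le_mul_right T hlt2
          omega
        · have : (i' + 1) * T ≤ i * T := Nat.mul_le_mul_right T hlt2
          omega
      obtain ⟨x, hx⟩ := hhit _ ⟨_, _, hdisj, subset_rfl⟩
      obtain ⟨hxu, hxH⟩ := Finset.mem_inter.mp hx
      rcases Finset.mem_union.mp hxu with hxi | hxi
      · exact hgood i hik hiB x hxH hxi
      · exact hgood i' hi'k hi'B x hxH hxi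
end

section
/- Let Z_N be partitioned into M groups P_1,...,P_M of sizes N_1,...,N_M, where within group P_i the colluding sets are the cyclic intervals of length T_i (with respect to a cyclic ordering of P_i). Let F be the family of subsets S containing two disjoint colluding sets (from the same or different groups). Then the hitting number of F equals Σ_{i=1}^M ⌈N_i/T_i⌉ - 1. -/
lemma mem_cycInt {N T : ℕ} [NeZero N] (hTN : T ≤ N) (x j : ZMod N) :
    x ∈ cycInt N T j ↔ (x - j).val < T := by
  simp only [cycInt, Finset.mem_image, Finset.mem_range]
  constructor
  · rintro ⟨t, ht, rfl⟩
    have : (j + (t:ZMod N)) - j = (t : ZMod N) := by ring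
    rw [this, ZMod.val_natCast_of_lt (lt_of_lt_of_le ht hTN)]
    exact ht
  · intro h
    refine ⟨(x - j).val, h, ?_⟩
    rw [ZMod.natCast_val, ZMod.cast_id]
    ring

lemma mem_cycInt_zero {N T : ℕ} [NeZero N] (hTN : T ≤ N) (j : ZMod N)
    (h : N - j.val < T ∨ (j = 0 ∧ 1 ≤ T)) : (0 : ZMod N) ∈ cycInt N T j := by
  rw [mem_cycInt hTN]
  rcases h with h | ⟨rfl, h⟩
  · rcases eq_or_ne j 0 with rfl | hj
    · have hN : 0 < N := NeZero.pos N
      simp only [ZMod.val_zero, Nat.sub_zero] at h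
      simp only [sub_zero, ZMod.val_zero]
      omega
    · rw [zero_sub, ZMod.neg_val, if_neg hj]
      exact h
  · simpa using (show 0 < T by omega)

/-- Starts of intervals containing `x`. -/
def hitStarts (N T : ℕ) (x : ZMod N) : Finset (ZMod N) :=
  (Finset.range T).image (fun t : ℕ => x - (t : ZMod N))

lemma mem_cycInt_iff_hitStarts {N T : ℕ} (x j : ZMod N) :
    x ∈ cycInt N T j ↔ j ∈ hitStarts N T x := by
  simp only [cycInt, hitStarts, Finset.mem_image, Finset.mem_range]
  constructor
  · rintro ⟨t, ht, rfl⟩; exact ⟨t, ht, by ring⟩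
  · rintro ⟨t, ht, rfl⟩; exact ⟨t, ht, by ring⟩

/-- Lemma B: a set with fewer than `N/T` points misses some interval. -/
lemma exists_avoid {N T : ℕ} [NeZero N] (K : Finset (ZMod N))
    (h : K.card * T < N) : ∃ j, Disjoint (cycInt N T j) K := by
  have hcard : (K.biUnion (hitStarts N T)).card < N := by
    calc (K.biUnion (hitStarts N T)).card ≤ ∑ x ∈ K, (hitStarts N T x).card :=
          Finset.card_biUnion_le
      _ ≤ ∑ _x ∈ K, T := Finset.sum_le_sum (fun x _ =>
          le_trans Finset.card_image_le (by simp))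
      _ = K.card * T := by simp [Finset.sum_const, mul_comm]
      _ < N := h
  have : ∃ j : ZMod N, j ∉ K.biUnion (hitStarts N T) := by
    by_contra hc
    push_neg at hc
    have : (Finset.univ : Finset (ZMod N)).card ≤ (K.biUnion (hitStarts N T)).card :=
      Finset.card_le_card (fun j _ => hc j)
    rw [Finset.card_univ, ZMod.card] at this
    omega
  obtain ⟨j, hj⟩ := this
  refine ⟨j, Finset.disjoint_left.2 (fun x hx hxK => hj ?_)⟩
  exact Finset.mem_biUnion.2 ⟨x, hxK, (mem_cycInt_iff_hitStarts x j).1 hx⟩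

/-- Two intervals at cyclic distance in `[T, N-T]` are disjoint. -/
lemma cycInt_disjoint {N T : ℕ} [NeZero N] {j₁ j₂ : ZMod N}
    (h₁ : T ≤ (j₁ - j₂).val) (h₂ : (j₁ - j₂).val + T ≤ N) :
    Disjoint (cycInt N T j₁) (cycInt N T j₂) := by
  have hTN : T ≤ N := by omega
  rw [Finset.disjoint_left]
  intro x hx1 hx2
  rw [mem_cycInt hTN] at hx1 hx2
  have key : (x - j₂) = (x - j₁) + (j₁ - j₂) := by ring
  have := ZMod.val_add (x - j₁) (j₁ - j₂)
  rw [← key] at this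
  have hlt : (x - j₁).val + (j₁ - j₂).val < N := by omega
  rw [Nat.mod_eq_of_lt hlt] at this
  omega

lemma self_mem_cycInt {N T : ℕ} [NeZero N] (hT : 1 ≤ T) (hTN : T ≤ N) (x : ZMod N) :
    x ∈ cycInt N T x := by
  rw [mem_cycInt hTN]
  simpa using (show 0 < T by omega)

/-- Lemma A: a set that leaves no two disjoint intervals uncovered has ≥ N/T - 1 points. -/
lemma two_disjoint {N T : ℕ} [NeZero N] (hT : 1 ≤ T) (hN2 : 2*T ≤ N)
    (K : Finset (ZMod N)) (hc : (K.card + 1) * T < N) :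
    ∃ j₁ j₂ : ZMod N, Disjoint (cycInt N T j₁) (cycInt N T j₂) ∧
      Disjoint (cycInt N T j₁) K ∧ Disjoint (cycInt N T j₂) K := by
  classical
  have hTN : T ≤ N := by omega
  rcases K.eq_empty_or_nonempty with rfl | ⟨x₀, hx₀⟩
  · refine ⟨(T : ZMod N), 0, ?_, Finset.disjoint_empty_right _, Finset.disjoint_empty_right _⟩
    apply cycInt_disjoint
    · rw [sub_zero, ZMod.val_natCast_of_lt (by omega)]
    · rw [sub_zero, ZMod.val_natCast_of_lt (by omega)]; omega
  · have hcK : K.card * T < N :=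
      lt_of_le_of_lt (Nat.mul_le_mul_right T (Nat.le_succ _)) hc
    obtain ⟨ja, hja⟩ := exists_avoid K hcK
    by_contra hcon
    push_neg at hcon
    have hP : ∃ s : ℕ, ¬ Disjoint (cycInt N T (ja - (s : ZMod N))) K := by
      refine ⟨(ja - x₀).val, ?_⟩
      rw [ZMod.natCast_val, ZMod.cast_id, sub_sub_cancel]
      exact Finset.not_disjoint_iff.2 ⟨x₀, self_mem_cycInt hT hTN x₀, hx₀⟩
    set s₁ := Nat.find hP with hs₁def
    have hspec := Nat.find_spec hP
    have hs₁pos : 0 < s₁ := by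
      rcases Nat.eq_zero_or_pos s₁ with h0 | h; swap; exact h
      rw [← hs₁def, h0] at hspec
      simp only [Nat.cast_zero, sub_zero] at hspec
      exact absurd hja hspec
    set j₀ := ja - ((s₁ - 1 : ℕ) : ZMod N) with hj₀def
    have hj₀ : Disjoint (cycInt N T j₀) K :=
      not_not.1 (Nat.find_min hP (show s₁ - 1 < s₁ by omega))
    have hj₀m1 : ja - ((s₁ : ℕ) : ZMod N) = j₀ - 1 := by
      rw [hj₀def]
      have : ((s₁ : ℕ) : ZMod N) = ((s₁ - 1 : ℕ) : ZMod N) + 1 := by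
        have h : (s₁ - 1) + 1 = s₁ := by omega
        conv_lhs => rw [← h]
        rw [Nat.cast_add, Nat.cast_one]
      rw [this]
      ring
    rw [hj₀m1] at hspec
    have hmem : (j₀ - 1) ∈ K := by
      obtain ⟨y, hyI, hyK⟩ := Finset.not_disjoint_iff.1 hspec
      rcases eq_or_ne y (j₀ - 1) with rfl | hne
      · exact hyK
      · exfalso
        have hc1 : (y - (j₀ - 1)).val < T := (mem_cycInt hTN _ _).1 hyI
        have hc0 : 1 ≤ (y - (j₀ - 1)).val := by
          rcases Nat.eq_zero_or_pos (y - (j₀ - 1)).val with h0 | h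
          · exact absurd (sub_eq_zero.1 ((ZMod.val_eq_zero _).1 h0)) hne
          · exact h
        have hyj : y - j₀ = (((y - (j₀ - 1)).val - 1 : ℕ) : ZMod N) := by
          have h1 : y - j₀ = (y - (j₀ - 1)) - 1 := by ring
          have h2 : (((y - (j₀ - 1)).val - 1 : ℕ) : ZMod N)
              = (((y - (j₀ - 1)).val : ℕ) : ZMod N) - 1 := by
            rw [Nat.cast_sub hc0, Nat.cast_one]
          rw [h1, h2, ZMod.natCast_val, ZMod.cast_id]
        have : y ∈ cycInt N T j₀ := by
          rw [mem_cycInt hTN, hyj, ZMod.val_natCast_of_lt (by omega)]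
          omega
        exact Finset.disjoint_left.1 hj₀ this hyK
    -- counting
    set A' := (Finset.range (N - 2*T)).image (fun r : ℕ => j₀ + ((T + r : ℕ) : ZMod N))
      with hA'def
    have hA'card : A'.card = N - 2*T := by
      rw [hA'def, Finset.card_image_of_injOn, Finset.card_range]
      intro r hr r' hr' heq
      simp only [Finset.coe_range, Set.mem_Iio] at hr hr'
      have : ((T + r : ℕ) : ZMod N) = ((T + r' : ℕ) : ZMod N) :=
        add_left_cancel heq
      have := congrArg ZMod.val this
      rw [ZMod.val_natCast_of_lt (by omega), ZMod.val_natCast_of_lt (by omega)] at this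
      omega
    have hsub : A' ⊆ (K.erase (j₀ - 1)).biUnion (hitStarts N T) := by
      intro j hj
      rw [hA'def, Finset.mem_image] at hj
      obtain ⟨r, hr, rfl⟩ := hj
      rw [Finset.mem_range] at hr
      have hd : ((j₀ + ((T + r : ℕ) : ZMod N)) - j₀).val = T + r := by
        rw [add_sub_cancel_left, ZMod.val_natCast_of_lt (by omega)]
      have hdisj : Disjoint (cycInt N T (j₀ + ((T + r : ℕ) : ZMod N))) (cycInt N T j₀) :=
        cycInt_disjoint (by omega) (by omega)
      have hnd := hcon j₀ (j₀ + ((T + r : ℕ) : ZMod N)) hdisj.symm hj₀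
      obtain ⟨x, hxI, hxK⟩ := Finset.not_disjoint_iff.1 hnd
      have hxne : x ≠ j₀ - 1 := by
        rintro rfl
        have hlt : ((j₀ - 1) - (j₀ + ((T + r : ℕ) : ZMod N))).val < T :=
          (mem_cycInt hTN _ _).1 hxI
        have heq : (j₀ - 1) - (j₀ + ((T + r : ℕ) : ZMod N))
            = ((N - (1 + T + r) : ℕ) : ZMod N) := by
          have h2 : ((N - (1 + T + r) : ℕ) : ZMod N)
              = ((N : ℕ) : ZMod N) - ((1 + T + r : ℕ) : ZMod N) := by
            rw [← Nat.cast_sub (by omega)]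
          rw [h2, ZMod.natCast_self]
          push_cast
          ring
        rw [heq, ZMod.val_natCast_of_lt (by omega)] at hlt
        omega
      exact Finset.mem_biUnion.2 ⟨x, Finset.mem_erase.2 ⟨hxne, hxK⟩,
        (mem_cycInt_iff_hitStarts x _).1 hxI⟩
    have h1 : N - 2*T ≤ (K.erase (j₀ - 1)).card * T := by
      calc N - 2*T = A'.card := hA'card.symm
        _ ≤ ((K.erase (j₀ - 1)).biUnion (hitStarts N T)).card := Finset.card_le_card hsub
        _ ≤ ∑ x ∈ K.erase (j₀ - 1), (hitStarts N T x).card := Finset.card_biUnion_le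
        _ ≤ ∑ _x ∈ K.erase (j₀ - 1), T := Finset.sum_le_sum (fun x _ =>
            le_trans Finset.card_image_le (by simp))
        _ = (K.erase (j₀ - 1)).card * T := by simp [Finset.sum_const, mul_comm]
    rw [Finset.card_erase_of_mem hmem] at h1
    have h3 : 1 ≤ K.card := Finset.card_pos.2 ⟨_, hmem⟩
    have h4 : (K.card - 1) * T + 2*T = (K.card + 1) * T := by
      have h5 : K.card - 1 + 2 = K.card + 1 := by omega
      rw [← h5, add_mul]
    omega

lemma ceil_facts (N T : ℕ) (hT : 1 ≤ T) (hN : 2*T ≤ N) :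
    (⌈(N:ℚ)/(T:ℚ)⌉₊ - 1) * T < N ∧ N ≤ ⌈(N:ℚ)/(T:ℚ)⌉₊ * T ∧ 2 ≤ ⌈(N:ℚ)/(T:ℚ)⌉₊ := by
  have hT0 : (0:ℚ) < T := by positivity
  set m := ⌈(N:ℚ)/(T:ℚ)⌉₊ with hm
  have h2 : 2 ≤ m := by
    rw [hm]
    have h1 : (1:ℕ) < ⌈(N:ℚ)/(T:ℚ)⌉₊ := by
      rw [Nat.lt_ceil]
      rw [lt_div_iff₀ hT0]
      push_cast
      have : (T:ℚ) * 2 ≤ N := by exact_mod_cast (by omega : T * 2 ≤ N)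
      nlinarith
    omega
  have hup : N ≤ m * T := by
    have := Nat.le_ceil ((N:ℚ)/(T:ℚ))
    rw [div_le_iff₀ hT0] at this
    exact_mod_cast this
  have hlo : (m - 1) * T < N := by
    have h1 : ((m - 1 : ℕ) : ℚ) < (N:ℚ)/(T:ℚ) := by
      rw [← Nat.lt_ceil]
      omega
    rw [lt_div_iff₀ hT0] at h1
    exact_mod_cast h1
  exact ⟨hlo, hup, h2⟩

/-- Any interval either contains a positive multiple `k*T`, `1 ≤ k < m`, or contains `0`. -/
lemma hit_or_zero {N T m : ℕ} [NeZero N] (hT : 1 ≤ T) (hN2 : 2*T ≤ N)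
    (hup : N ≤ m * T) (j : ZMod N) :
    (∃ k, 1 ≤ k ∧ k < m ∧ ((k*T : ℕ) : ZMod N) ∈ cycInt N T j) ∨
      (0 : ZMod N) ∈ cycInt N T j := by
  have hTN : T ≤ N := by omega
  have hv : j.val < N := ZMod.val_lt j
  rcases Nat.eq_zero_or_pos j.val with hv0 | hv1
  · right
    exact mem_cycInt_zero hTN j (Or.inr ⟨(ZMod.val_eq_zero j).1 hv0, hT⟩)
  rcases le_or_gt (j.val + T) N with hcase | hcase
  · left
    set v := j.val with hvdef
    set k := (v + T - 1) / T with hkdef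
    have hk1 : k * T ≤ v + T - 1 := by
      rw [hkdef]
      exact Nat.div_mul_le_self _ _
    have hk2 : v + T - 1 < (k + 1) * T := by
      rw [hkdef]
      exact (Nat.div_lt_iff_lt_mul (by omega)).1 (Nat.lt_succ_self _)
    have hk2' : v + T - 1 < k * T + T := by
      have := hk2
      rw [add_mul, one_mul] at this
      exact this
    have hvk : v ≤ k * T := by omega
    have hkv : k * T ≤ v + T - 1 := hk1
    have hk1' : 1 ≤ k := by
      by_contra h
      push_neg at h
      interval_cases k
      omega
    have hkm : k < m := by
      by_contra h
      push_neg at h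
      have : m * T ≤ k * T := Nat.mul_le_mul_right T h
      omega
    refine ⟨k, hk1', hkm, ?_⟩
    rw [mem_cycInt hTN]
    have hj : j = ((v : ℕ) : ZMod N) := by
      rw [hvdef, ZMod.natCast_val, ZMod.cast_id]
    have : ((k*T : ℕ) : ZMod N) - j = ((k*T - v : ℕ) : ZMod N) := by
      rw [hj, ← Nat.cast_sub hvk]
    rw [this, ZMod.val_natCast_of_lt (by omega)]
    omega
  · right
    exact mem_cycInt_zero hTN j (Or.inl (by omega))

/-- For `M` disjoint groups, the `i`-th identified with `ZMod (Nc i)` and with colluding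
sets the cyclic intervals of length `T i`, the hitting number of the family of sets
containing two disjoint colluding sets (from the same or different groups) equals
`Σ_i ⌈Nc i / T i⌉ - 1`. -/
theorem hitting_number_disjoint_cyclic_contiguous (M : ℕ) (hM : 1 ≤ M)
    (Nc T : Fin M → ℕ) (hT : ∀ i, 1 ≤ T i) (hN : ∀ i, 2 * T i ≤ Nc i) :
    IsLeast {k : ℕ | ∃ H : Finset ((i : Fin M) × ZMod (Nc i)), H.card = k ∧
      ∀ S : Finset ((i : Fin M) × ZMod (Nc i)),
        (∃ C₁ C₂ : Finset ((i : Fin M) × ZMod (Nc i)),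
          (∃ i j, C₁ = (cycInt (Nc i) (T i) j).image (Sigma.mk i)) ∧
          (∃ i j, C₂ = (cycInt (Nc i) (T i) j).image (Sigma.mk i)) ∧
          Disjoint C₁ C₂ ∧ C₁ ∪ C₂ ⊆ S) → (S ∩ H).Nonempty}
      (∑ i, ⌈(Nc i : ℚ) / (T i : ℚ)⌉₊ - 1) := by
  classical
  haveI inst : ∀ i, NeZero (Nc i) := fun i => ⟨by have := hN i; have := hT i; omega⟩
  obtain ⟨m, hm⟩ : ∃ m : Fin M → ℕ, ∀ i, m i = ⌈(Nc i : ℚ) / (T i : ℚ)⌉₊ :=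
    ⟨_, fun i => rfl⟩
  have hsumeq : ∑ i, ⌈(Nc i : ℚ) / (T i : ℚ)⌉₊ = ∑ i, m i :=
    Finset.sum_congr rfl (fun i _ => (hm i).symm)
  rw [hsumeq]
  have hfacts : ∀ i, (m i - 1) * T i < Nc i ∧ Nc i ≤ m i * T i ∧ 2 ≤ m i := by
    intro i
    rw [hm i]
    exact ceil_facts (Nc i) (T i) (hT i) (hN i)
  set i₀ : Fin M := ⟨0, hM⟩ with hi₀def
  constructor
  · -- membership: the construction
    set Kfull : (i : Fin M) → Finset (ZMod (Nc i)) :=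
      fun i => (Finset.range (m i)).image (fun k : ℕ => ((k * T i : ℕ) : ZMod (Nc i)))
      with hKfull
    set Kc : (i : Fin M) → Finset (ZMod (Nc i)) :=
      fun i => if i = i₀ then (Kfull i).erase 0 else Kfull i with hKc
    have hmulval : ∀ (i : Fin M) (k : ℕ), k < m i →
        ((k * T i : ℕ) : ZMod (Nc i)).val = k * T i := by
      intro i k hk
      have h1 : k * T i ≤ (m i - 1) * T i := Nat.mul_le_mul_right _ (by omega)
      exact ZMod.val_natCast_of_lt (by have := (hfacts i).1; omega)
    have hKfullcard : ∀ i, (Kfull i).card = m i := by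
      intro i
      rw [hKfull, Finset.card_image_of_injOn, Finset.card_range]
      intro k hk k' hk' heq
      simp only [Finset.coe_range, Set.mem_Iio] at hk hk'
      have := congrArg ZMod.val heq
      rw [hmulval i k hk, hmulval i k' hk'] at this
      exact Nat.eq_of_mul_eq_mul_right (by have := hT i; omega) this
    have hzeromem : ∀ i, (0 : ZMod (Nc i)) ∈ Kfull i := by
      intro i
      rw [hKfull]
      exact Finset.mem_image.2 ⟨0, Finset.mem_range.2 (by have := (hfacts i).2.2; omega),
        by simp⟩
    have hKccard : ∀ i, (Kc i).card = if i = i₀ then m i - 1 else m i := by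
      intro i
      simp only [hKc]
      by_cases hi : i = i₀
      · rw [if_pos hi, if_pos hi, Finset.card_erase_of_mem (hzeromem i), hKfullcard]
      · rw [if_neg hi, if_neg hi, hKfullcard]
    refine ⟨Finset.univ.sigma Kc, ?_, ?_⟩
    · rw [Finset.card_sigma]
      have h1 : ∑ i, (Kc i).card
          = (Kc i₀).card + ∑ i ∈ Finset.univ.erase i₀, (Kc i).card :=
        (Finset.add_sum_erase _ _ (Finset.mem_univ i₀)).symm
      have h2 : ∑ i, m i = m i₀ + ∑ i ∈ Finset.univ.erase i₀, m i :=
        (Finset.add_sum_erase _ _ (Finset.mem_univ i₀)).symm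
      have h3 : ∑ i ∈ Finset.univ.erase i₀, (Kc i).card
          = ∑ i ∈ Finset.univ.erase i₀, m i := by
        refine Finset.sum_congr rfl (fun i hi => ?_)
        rw [hKccard, if_neg (Finset.mem_erase.1 hi).1]
      have h4 : (Kc i₀).card = m i₀ - 1 := by rw [hKccard, if_pos rfl]
      have h5 := (hfacts i₀).2.2
      omega
    · intro S hS
      obtain ⟨C₁, C₂, ⟨i₁, j₁, hC₁⟩, ⟨i₂, j₂, hC₂⟩, hdisj, hsub⟩ := hS
      have main : ∀ (i : Fin M) (j : ZMod (Nc i)),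
          (∃ y, y ∈ cycInt (Nc i) (T i) j ∧ y ∈ Kc i) ∨
            (i = i₀ ∧ (0 : ZMod (Nc i)) ∈ cycInt (Nc i) (T i) j) := by
        intro i j
        rcases hit_or_zero (hT i) (hN i) (hfacts i).2.1 j with ⟨k, hk1, hkm, hkmem⟩ | h0
        · left
          refine ⟨_, hkmem, ?_⟩
          have hin : ((k * T i : ℕ) : ZMod (Nc i)) ∈ Kfull i :=
            Finset.mem_image.2 ⟨k, Finset.mem_range.2 hkm, rfl⟩
          simp only [hKc]
          by_cases hi : i = i₀
          · rw [if_pos hi]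
            refine Finset.mem_erase.2 ⟨?_, hin⟩
            intro h0
            have := congrArg ZMod.val h0
            rw [hmulval i k hkm, ZMod.val_zero] at this
            have := hT i
            nlinarith
          · rw [if_neg hi]; exact hin
        · by_cases hi : i = i₀
          · right; exact ⟨hi, h0⟩
          · left
            refine ⟨0, h0, ?_⟩
            simp only [hKc]
            rw [if_neg hi]
            exact hzeromem i
      have done1 : ∀ (i : Fin M) (j : ZMod (Nc i)) (C : Finset ((i : Fin M) × ZMod (Nc i))),
          C = (cycInt (Nc i) (T i) j).image (Sigma.mk i) → C ⊆ S →
          (∃ y, y ∈ cycInt (Nc i) (T i) j ∧ y ∈ Kc i) →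
          (S ∩ Finset.univ.sigma Kc).Nonempty := by
        rintro i j C rfl hCS ⟨y, hyI, hyK⟩
        refine ⟨⟨i, y⟩, Finset.mem_inter.2 ⟨hCS (Finset.mem_image.2 ⟨y, hyI, rfl⟩), ?_⟩⟩
        exact Finset.mem_sigma.2 ⟨Finset.mem_univ _, hyK⟩
      rcases main i₁ j₁ with h1 | ⟨hi1, h01⟩
      · exact done1 i₁ j₁ C₁ hC₁ (fun a ha => hsub (Finset.mem_union_left _ ha)) h1
      rcases main i₂ j₂ with h2 | ⟨hi2, h02⟩
      · exact done1 i₂ j₂ C₂ hC₂ (fun a ha => hsub (Finset.mem_union_right _ ha)) h2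
      · exfalso
        subst hi1
        subst hi2
        have hm1 : (⟨i₀, 0⟩ : (i : Fin M) × ZMod (Nc i)) ∈ C₁ := by
          rw [hC₁]; exact Finset.mem_image.2 ⟨0, h01, rfl⟩
        have hm2 : (⟨i₀, 0⟩ : (i : Fin M) × ZMod (Nc i)) ∈ C₂ := by
          rw [hC₂]; exact Finset.mem_image.2 ⟨0, h02, rfl⟩
        exact Finset.disjoint_left.1 hdisj hm1 hm2
  · -- lower bound
    rintro n ⟨H, hcard, hprop⟩
    set K : (i : Fin M) → Finset (ZMod (Nc i)) :=
      fun i => Finset.univ.filter (fun x : ZMod (Nc i) => Sigma.mk i x ∈ H) with hK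
    have hmemK : ∀ (i : Fin M) (x : ZMod (Nc i)), x ∈ K i ↔ Sigma.mk i x ∈ H := by
      intro i x; rw [hK]; simp
    have hHK : H = Finset.univ.sigma K := by
      ext ⟨i, x⟩
      rw [Finset.mem_sigma, hmemK]
      simp
    have hcard2 : H.card = ∑ i, (K i).card := by rw [hHK, Finset.card_sigma]
    have hbound_full : ∀ i, (∀ j, ¬ Disjoint (cycInt (Nc i) (T i) j) (K i)) →
        m i ≤ (K i).card := by
      intro i hall
      by_contra h
      push_neg at h
      have h2 : (K i).card * T i < Nc i :=
        lt_of_le_of_lt (Nat.mul_le_mul_right _ (by omega)) (hfacts i).1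
      obtain ⟨j, hj⟩ := exists_avoid (K i) h2
      exact hall j hj
    by_cases hA : ∃ (i : Fin M) (j : ZMod (Nc i)), Disjoint (cycInt (Nc i) (T i) j) (K i)
    · obtain ⟨ia, ja, hja⟩ := hA
      have hbad : ∀ (i₁ : Fin M) (jx : ZMod (Nc i₁)) (i₂ : Fin M) (jy : ZMod (Nc i₂)),
          Disjoint ((cycInt (Nc i₁) (T i₁) jx).image (Sigma.mk i₁) :
              Finset ((i : Fin M) × ZMod (Nc i)))
            ((cycInt (Nc i₂) (T i₂) jy).image (Sigma.mk i₂)) →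
          Disjoint (cycInt (Nc i₁) (T i₁) jx) (K i₁) →
          Disjoint (cycInt (Nc i₂) (T i₂) jy) (K i₂) → False := by
        intro i₁ jx i₂ jy hd h1 h2
        obtain ⟨a, ha⟩ := hprop
          ((cycInt (Nc i₁) (T i₁) jx).image (Sigma.mk i₁) ∪
            (cycInt (Nc i₂) (T i₂) jy).image (Sigma.mk i₂))
          ⟨(cycInt (Nc i₁) (T i₁) jx).image (Sigma.mk i₁),
            (cycInt (Nc i₂) (T i₂) jy).image (Sigma.mk i₂),
            ⟨i₁, jx, rfl⟩, ⟨i₂, jy, rfl⟩, hd, Finset.Subset.refl _⟩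
        rw [Finset.mem_inter] at ha
        obtain ⟨haS, haH⟩ := ha
        rcases Finset.mem_union.1 haS with h | h
        · obtain ⟨x, hx, rfl⟩ := Finset.mem_image.1 h
          exact Finset.disjoint_left.1 h1 hx ((hmemK i₁ x).2 haH)
        · obtain ⟨x, hx, rfl⟩ := Finset.mem_image.1 h
          exact Finset.disjoint_left.1 h2 hx ((hmemK i₂ x).2 haH)
      have hcross : ∀ (i₁ i₂ : Fin M), i₁ ≠ i₂ →
          ∀ (A : Finset (ZMod (Nc i₁))) (B : Finset (ZMod (Nc i₂))),
          Disjoint (A.image (Sigma.mk i₁) : Finset ((i : Fin M) × ZMod (Nc i)))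
            (B.image (Sigma.mk i₂)) := by
        intro i₁ i₂ hne A B
        rw [Finset.disjoint_left]
        intro a ha hb
        obtain ⟨x, _, rfl⟩ := Finset.mem_image.1 ha
        obtain ⟨y, _, heq⟩ := Finset.mem_image.1 hb
        exact hne (congrArg Sigma.fst heq).symm
      have hfull : ∀ i, i ≠ ia → m i ≤ (K i).card := by
        intro i hi
        apply hbound_full
        intro j hdisjK
        exact hbad ia ja i j (hcross ia i (fun h => hi h.symm) _ _) hja hdisjK
      have hia : m ia - 1 ≤ (K ia).card := by
        by_contra h
        push_neg at h
        have h2 : ((K ia).card + 1) * T ia < Nc ia :=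
          lt_of_le_of_lt (Nat.mul_le_mul_right _ (by omega)) (hfacts ia).1
        obtain ⟨ju, jv, hdd, hu, hv⟩ := two_disjoint (hT ia) (hN ia) (K ia) h2
        exact hbad ia ju ia jv ((Finset.disjoint_image sigma_mk_injective).2 hdd) hu hv
      have hsum1 : ∑ i, m i = m ia + ∑ i ∈ Finset.univ.erase ia, m i :=
        (Finset.add_sum_erase _ _ (Finset.mem_univ ia)).symm
      have hsum2 : ∑ i, (K i).card
          = (K ia).card + ∑ i ∈ Finset.univ.erase ia, (K i).card :=
        (Finset.add_sum_erase _ _ (Finset.mem_univ ia)).symm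
      have hsum3 : ∑ i ∈ Finset.univ.erase ia, m i
          ≤ ∑ i ∈ Finset.univ.erase ia, (K i).card :=
        Finset.sum_le_sum (fun i hi => hfull i (Finset.mem_erase.1 hi).1)
      have h5 := (hfacts ia).2.2
      omega
    · push_neg at hA
      have : ∑ i, m i ≤ ∑ i, (K i).card :=
        Finset.sum_le_sum (fun i _ => hbound_full i (hA i))
      omega
end

section
/- Fractional Shearer's lemma: Let X_1,...,X_n be jointly distributed discrete random variables, and let α : P → Q_+ be a fractional covering of [1:n] with respect to a family P of subsets of [1:n], i.e., Σ_{S ∈ P : i ∈ S} α(S) ≥ 1 for all i. Then H(X_{[1:n]}) ≤ Σ_{S ∈ P} α(S) H(X_S). -/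
set_option linter.unusedSectionVars false

/-- Shannon entropy (in nats) of the discrete random variable `f` on the finite
probability space `Ω` with probability mass function `p`. -/
noncomputable def ent {Ω α : Type*} [Fintype Ω] [Fintype α] [DecidableEq α]
    (p : Ω → ℝ) (f : Ω → α) : ℝ :=
  ∑ a : α, Real.negMulLog (∑ ω ∈ Finset.univ.filter (fun ω => f ω = a), p ω)

section ShearerAux

open Real Finset

variable {Ω α β γ : Type*} [Fintype Ω] [Fintype α] [Fintype β] [Fintype γ]
  [DecidableEq α] [DecidableEq β] [DecidableEq γ]

/-- The probability mass function of `f`. -/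
noncomputable def pm (p : Ω → ℝ) (f : Ω → α) (a : α) : ℝ :=
  ∑ ω ∈ Finset.univ.filter (fun ω => f ω = a), p ω

lemma ent_eq (p : Ω → ℝ) (f : Ω → α) :
    ent p f = ∑ a : α, Real.negMulLog (pm p f a) := rfl

lemma pm_nonneg {p : Ω → ℝ} (hp0 : ∀ ω, 0 ≤ p ω) (f : Ω → α) (a : α) :
    0 ≤ pm p f a :=
  Finset.sum_nonneg fun ω _ => hp0 ω

lemma sum_pm (p : Ω → ℝ) (f : Ω → α) : ∑ a, pm p f a = ∑ ω, p ω :=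
  Finset.sum_fiberwise_of_maps_to (fun x _ => mem_univ (f x)) p

lemma pm_congr {p : Ω → ℝ} {f : Ω → α} {g : Ω → β}
    (h : ∀ ω ω', f ω = f ω' ↔ g ω = g ω') (ω₀ : Ω) :
    pm p f (f ω₀) = pm p g (g ω₀) := by
  unfold pm
  congr 1
  ext ω
  simp [h ω ω₀]

lemma pm_eq_zero_of_not_mem {p : Ω → ℝ} {f : Ω → α} {a : α}
    (ha : a ∉ univ.image f) : pm p f a = 0 := by
  unfold pm
  have h0 : univ.filter (fun ω => f ω = a) = ∅ :=
    Finset.filter_eq_empty_iff.mpr fun {ω} _ hfa =>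
      ha (hfa ▸ Finset.mem_image_of_mem f (mem_univ ω))
  rw [h0, Finset.sum_empty]

/-- Entropy only depends on the fibers of the random variable. -/
lemma ent_congr {p : Ω → ℝ} {f : Ω → α} {g : Ω → β}
    (h : ∀ ω ω', f ω = f ω' ↔ g ω = g ω') : ent p f = ent p g := by
  classical
  rw [ent_eq, ent_eq]
  have hf : ∀ a ∈ (univ : Finset α), a ∉ univ.image f → Real.negMulLog (pm p f a) = 0 := by
    intro a _ ha
    rw [pm_eq_zero_of_not_mem ha, Real.negMulLog_zero]
  have hg : ∀ b ∈ (univ : Finset β), b ∉ univ.image g → Real.negMulLog (pm p g b) = 0 := by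
    intro b _ hb
    rw [pm_eq_zero_of_not_mem hb, Real.negMulLog_zero]
  rw [← Finset.sum_subset (Finset.subset_univ (univ.image f)) hf,
      ← Finset.sum_subset (Finset.subset_univ (univ.image g)) hg]
  have key : ∀ a ∈ univ.image f, ∃ ω, f ω = a := by
    intro a ha
    rcases Finset.mem_image.mp ha with ⟨ω, -, hω⟩
    exact ⟨ω, hω⟩
  refine Finset.sum_bij (fun a ha => g (key a ha).choose) ?_ ?_ ?_ ?_
  · intro a ha
    exact Finset.mem_image_of_mem g (mem_univ _)
  · intro a₁ ha₁ a₂ ha₂ heq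
    have h1 := (key a₁ ha₁).choose_spec
    have h2 := (key a₂ ha₂).choose_spec
    rw [← h1, ← h2]
    exact (h _ _).mpr heq
  · intro b hb
    rcases Finset.mem_image.mp hb with ⟨ω, -, hω⟩
    refine ⟨f ω, Finset.mem_image_of_mem f (mem_univ ω), ?_⟩
    have h1 := (key (f ω) (Finset.mem_image_of_mem f (mem_univ ω))).choose_spec
    rw [← hω]
    exact (h _ _).mp h1
  · intro a ha
    have h1 := (key a ha).choose_spec
    have h2 := pm_congr (p := p) h (key a ha).choose
    rw [h1] at h2
    rw [h2]

/-- Entropy of an essentially constant random variable vanishes. -/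
lemma ent_of_subsingleton {p : Ω → ℝ} (hp1 : ∑ ω, p ω = 1) [Subsingleton α]
    (f : Ω → α) : ent p f = 0 := by
  rcases isEmpty_or_nonempty α with hα | hα
  · rw [ent_eq, Finset.univ_eq_empty, Finset.sum_empty]
  · obtain ⟨a0⟩ := hα
    rw [ent_eq, Fintype.sum_subsingleton _ a0]
    have hpm : pm p f a0 = 1 := by
      unfold pm
      rw [Finset.filter_true_of_mem fun ω _ => Subsingleton.elim _ _, hp1]
    rw [hpm, Real.negMulLog_one]

lemma pm_pair_snd (p : Ω → ℝ) (f : Ω → α) (g : Ω → β) (b : β) :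
    ∑ a, pm p (fun ω => (f ω, g ω)) (a, b) = pm p g b := by
  unfold pm
  rw [← Finset.sum_fiberwise_of_maps_to (g := f) (t := univ)
      (fun x _ => Finset.mem_univ (f x)) p]
  refine Finset.sum_congr rfl fun a _ => ?_
  congr 1
  rw [Finset.filter_filter]
  ext ω
  simp only [mem_filter, mem_univ, true_and, Prod.mk.injEq]
  tauto

lemma neg_mul_log_le {q P : ℝ} (hq : 0 ≤ q) (hP : q ≤ P) :
    -(q * Real.log P) ≤ Real.negMulLog q := by
  rcases eq_or_lt_of_le hq with h | h
  · simp [← h]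
  · rw [Real.negMulLog, neg_mul]
    have hlog : Real.log q ≤ Real.log P := Real.log_le_log h hP
    nlinarith

/-- `negMulLog` of a sum, with the log pulled inside the sum. -/
lemma negMulLog_sum_eq {ι : Type*} (s : Finset ι) (v : ι → ℝ) (P : ℝ)
    (hP : P = ∑ x ∈ s, v x) :
    Real.negMulLog P = ∑ x ∈ s, -(v x * Real.log P) := by
  rw [Real.negMulLog, neg_mul, Finset.sum_neg_distrib]
  congr 1
  rw [hP, Finset.sum_mul]

lemma neg_sum_mul {ι : Type*} (s : Finset ι) (v : ι → ℝ) (L : ℝ) :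
    -((∑ x ∈ s, v x) * L) = ∑ x ∈ s, -(v x * L) := by
  rw [Finset.sum_neg_distrib, Finset.sum_mul]

/-- Monotonicity: `H(g) ≤ H(f, g)`. -/
lemma ent_snd_le {p : Ω → ℝ} (hp0 : ∀ ω, 0 ≤ p ω) (f : Ω → α) (g : Ω → β) :
    ent p g ≤ ent p (fun ω => (f ω, g ω)) := by
  rw [ent_eq, ent_eq, Fintype.sum_prod_type_right]
  refine Finset.sum_le_sum fun b _ => ?_
  have hq : ∀ a, 0 ≤ pm p (fun ω => (f ω, g ω)) (a, b) := fun a => pm_nonneg hp0 _ _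
  have hsum : pm p g b = ∑ a, pm p (fun ω => (f ω, g ω)) (a, b) := (pm_pair_snd p f g b).symm
  rw [negMulLog_sum_eq univ _ _ hsum]
  refine Finset.sum_le_sum fun a _ => ?_
  refine neg_mul_log_le (hq a) ?_
  rw [hsum]
  exact Finset.single_le_sum (fun a' _ => hq a') (mem_univ a)

/-- Submodularity of entropy: `H(f, g, h) + H(g) ≤ H(f, g) + H(g, h)`. -/
lemma ent_submod {p : Ω → ℝ} (hp0 : ∀ ω, 0 ≤ p ω)
    (f : Ω → α) (g : Ω → β) (h : Ω → γ) :
    ent p (fun ω => (f ω, g ω, h ω)) + ent p g ≤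
      ent p (fun ω => (f ω, g ω)) + ent p (fun ω => (g ω, h ω)) := by
  classical
  set k : Ω → α × β × γ := fun ω => (f ω, g ω, h ω) with hk
  set r : α → β → γ → ℝ := fun a b c => pm p k (a, b, c) with hr
  have hr0 : ∀ a b c, 0 ≤ r a b c := fun a b c => pm_nonneg hp0 _ _
  set pab : α → β → ℝ := fun a b => ∑ c, r a b c with hpab
  set pbc : β → γ → ℝ := fun b c => ∑ a, r a b c with hpbc
  set pB : β → ℝ := fun b => ∑ a, ∑ c, r a b c with hpB
  have hpab0 : ∀ a b, 0 ≤ pab a b := fun a b => Finset.sum_nonneg fun c _ => hr0 a b c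
  have hpbc0 : ∀ b c, 0 ≤ pbc b c := fun b c => Finset.sum_nonneg fun a _ => hr0 a b c
  have hpB0 : ∀ b, 0 ≤ pB b := fun b =>
    Finset.sum_nonneg fun a _ => Finset.sum_nonneg fun c _ => hr0 a b c
  -- identify marginals
  have hab : ∀ a b, pm p (fun ω => (f ω, g ω)) (a, b) = pab a b := by
    intro a b
    have heq : ∀ c : γ, (univ.filter fun ω => k ω = (a, b, c))
        = (univ.filter fun ω => (f ω, g ω) = (a, b)).filter (fun ω => h ω = c) := by
      intro c
      rw [Finset.filter_filter]
      ext ω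
      simp only [mem_filter, mem_univ, true_and, hk, Prod.mk.injEq]
      tauto
    calc pm p (fun ω => (f ω, g ω)) (a, b)
        = ∑ c, ∑ ω ∈ (univ.filter fun ω => (f ω, g ω) = (a, b)).filter (fun ω => h ω = c),
            p ω := (Finset.sum_fiberwise_of_maps_to (fun x _ => Finset.mem_univ (h x)) p).symm
      _ = ∑ c, r a b c := by
            refine Finset.sum_congr rfl fun c _ => ?_
            have hrr : r a b c = ∑ ω ∈ univ.filter (fun ω => k ω = (a, b, c)), p ω := rfl
            rw [hrr, heq c]
  have hbc : ∀ b c, pm p (fun ω => (g ω, h ω)) (b, c) = pbc b c := by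
    intro b c
    have heq : ∀ a : α, (univ.filter fun ω => k ω = (a, b, c))
        = (univ.filter fun ω => (g ω, h ω) = (b, c)).filter (fun ω => f ω = a) := by
      intro a
      rw [Finset.filter_filter]
      ext ω
      simp only [mem_filter, mem_univ, true_and, hk, Prod.mk.injEq]
      tauto
    calc pm p (fun ω => (g ω, h ω)) (b, c)
        = ∑ a, ∑ ω ∈ (univ.filter fun ω => (g ω, h ω) = (b, c)).filter (fun ω => f ω = a),
            p ω := (Finset.sum_fiberwise_of_maps_to (fun x _ => Finset.mem_univ (f x)) p).symm
      _ = ∑ a, r a b c := by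
            refine Finset.sum_congr rfl fun a _ => ?_
            have hrr : r a b c = ∑ ω ∈ univ.filter (fun ω => k ω = (a, b, c)), p ω := rfl
            rw [hrr, heq a]
  have hB : ∀ b, pm p g b = pB b := by
    intro b
    rw [← pm_pair_snd p f g b]
    show ∑ a, pm p (fun ω => (f ω, g ω)) (a, b) = ∑ a, pab a b
    exact Finset.sum_congr rfl fun a _ => hab a b
  -- rewrite the four entropies as sums ordered `b`, `a`, `c`
  have e1 : ent p k = ∑ b, ∑ a, ∑ c, Real.negMulLog (r a b c) := by
    rw [ent_eq, Fintype.sum_prod_type, Finset.sum_comm, Fintype.sum_prod_type]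
    exact Finset.sum_congr rfl fun b _ => Finset.sum_comm
  have e2 : ent p (fun ω => (f ω, g ω))
      = ∑ b, ∑ a, ∑ c, -(r a b c * Real.log (pab a b)) := by
    rw [ent_eq, Fintype.sum_prod_type, Finset.sum_comm]
    refine Finset.sum_congr rfl fun b _ => Finset.sum_congr rfl fun a _ => ?_
    rw [hab a b]
    exact negMulLog_sum_eq univ _ _ rfl
  have e3 : ent p (fun ω => (g ω, h ω))
      = ∑ b, ∑ a, ∑ c, -(r a b c * Real.log (pbc b c)) := by
    rw [ent_eq, Fintype.sum_prod_type]
    refine Finset.sum_congr rfl fun b _ => ?_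
    rw [Finset.sum_comm]
    refine Finset.sum_congr rfl fun c _ => ?_
    rw [hbc b c]
    exact negMulLog_sum_eq univ _ _ rfl
  have e4 : ent p g = ∑ b, ∑ a, ∑ c, -(r a b c * Real.log (pB b)) := by
    rw [ent_eq]
    refine Finset.sum_congr rfl fun b _ => ?_
    rw [hB b, negMulLog_sum_eq univ (fun a => ∑ c, r a b c) (pB b) rfl]
    exact Finset.sum_congr rfl fun a _ => neg_sum_mul univ _ _
  rw [e1, e2, e3, e4, ← Finset.sum_add_distrib, ← Finset.sum_add_distrib]
  refine Finset.sum_le_sum fun b _ => ?_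
  have hmerge : ∀ F G : α → γ → ℝ, (∑ a, ∑ c, F a c) + (∑ a, ∑ c, G a c)
      = ∑ a, ∑ c, (F a c + G a c) := by
    intro F G
    rw [← Finset.sum_add_distrib]
    exact Finset.sum_congr rfl fun a _ => (Finset.sum_add_distrib).symm
  -- now a fixed `b`; Gibbs' argument
  set q : α → γ → ℝ := fun a c => if pB b = 0 then 0 else pab a b * pbc b c / pB b with hq
  have hq0 : ∀ a c, 0 ≤ q a c := by
    intro a c
    simp only [hq]
    split
    · exact le_rfl
    · exact div_nonneg (mul_nonneg (hpab0 a b) (hpbc0 b c)) (hpB0 b)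
  have key : ∀ a c,
      Real.negMulLog (r a b c) + -(r a b c * Real.log (pB b)) ≤
        (-(r a b c * Real.log (pab a b)) + -(r a b c * Real.log (pbc b c)))
          + (q a c - r a b c) := by
    intro a c
    rcases eq_or_lt_of_le (hr0 a b c) with hz | hz
    · rw [← hz]
      simp only [Real.negMulLog_zero, zero_mul, neg_zero, add_zero, zero_add, sub_zero]
      have := hq0 a c
      linarith
    · have hpabp : 0 < pab a b := lt_of_lt_of_le hz
        (Finset.single_le_sum (fun c' _ => hr0 a b c') (mem_univ c))
      have hpbcp : 0 < pbc b c := lt_of_lt_of_le hz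
        (Finset.single_le_sum (fun a' _ => hr0 a' b c) (mem_univ a))
      have hpBp : 0 < pB b := lt_of_lt_of_le hpabp
        (Finset.single_le_sum (fun a' _ => Finset.sum_nonneg fun c' _ => hr0 a' b c')
          (mem_univ a))
      have hqe : q a c = pab a b * pbc b c / pB b := by
        simp only [hq]
        exact if_neg hpBp.ne'
      have hX : (0:ℝ) < pab a b * pbc b c / (pB b * r a b c) :=
        div_pos (mul_pos hpabp hpbcp) (mul_pos hpBp hz)
      have hlog := Real.log_le_sub_one_of_pos hX
      have hlogX : Real.log (pab a b * pbc b c / (pB b * r a b c))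
          = Real.log (pab a b) + Real.log (pbc b c)
            - (Real.log (pB b) + Real.log (r a b c)) := by
        rw [Real.log_div (mul_pos hpabp hpbcp).ne' (mul_pos hpBp hz).ne',
          Real.log_mul hpabp.ne' hpbcp.ne', Real.log_mul hpBp.ne' hz.ne']
      have hrX : r a b c * (pab a b * pbc b c / (pB b * r a b c))
          = pab a b * pbc b c / pB b := by
        have h1 : pB b ≠ 0 := hpBp.ne'
        have h2 : r a b c ≠ 0 := hz.ne'
        field_simp
      have h2 : r a b c * Real.log (pab a b * pbc b c / (pB b * r a b c))
          ≤ pab a b * pbc b c / pB b - r a b c := by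
        have h3 := mul_le_mul_of_nonneg_left hlog hz.le
        rw [mul_sub, mul_one, hrX] at h3
        exact h3
      rw [hlogX] at h2
      rw [hqe, Real.negMulLog]
      nlinarith [h2]
  calc (∑ a, ∑ c, Real.negMulLog (r a b c)) + ∑ a, ∑ c, -(r a b c * Real.log (pB b))
      = ∑ a, ∑ c, (Real.negMulLog (r a b c) + -(r a b c * Real.log (pB b))) :=
        hmerge _ _
    _ ≤ ∑ a, ∑ c, ((-(r a b c * Real.log (pab a b)) + -(r a b c * Real.log (pbc b c)))
          + (q a c - r a b c)) :=
        Finset.sum_le_sum fun a _ => Finset.sum_le_sum fun c _ => key a c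
    _ = (∑ a, ∑ c, (-(r a b c * Real.log (pab a b)) + -(r a b c * Real.log (pbc b c))))
          + ((∑ a, ∑ c, q a c) - ∑ a, ∑ c, r a b c) := by
        rw [← Finset.sum_sub_distrib, ← Finset.sum_add_distrib]
        refine Finset.sum_congr rfl fun a _ => ?_
        rw [← Finset.sum_sub_distrib, ← Finset.sum_add_distrib]
    _ ≤ ∑ a, ∑ c, (-(r a b c * Real.log (pab a b)) + -(r a b c * Real.log (pbc b c))) := by
        have hsq : (∑ a, ∑ c, q a c) ≤ ∑ a, ∑ c, r a b c := by
          have hrB : ∑ a, ∑ c, r a b c = pB b := rfl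
          rw [hrB, hq]
          by_cases hB0 : pB b = 0
          · simp only [hB0, if_pos rfl]
            simp
          · simp only [if_neg hB0]
            have h1 : ∑ a, ∑ c, pab a b * pbc b c / pB b
                = (∑ a, pab a b) * (∑ c, pbc b c) / pB b := by
              rw [Finset.sum_mul_sum]
              rw [Finset.sum_div]
              refine Finset.sum_congr rfl fun a _ => ?_
              rw [Finset.sum_div]
            rw [h1]
            have h2 : ∑ a, pab a b = pB b := rfl
            have h3 : ∑ c, pbc b c = pB b := by
              show ∑ c, ∑ a, r a b c = ∑ a, ∑ c, r a b c
              exact Finset.sum_comm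
            rw [h2, h3]
            rw [mul_div_assoc, div_self hB0, mul_one]
        linarith
    _ = (∑ a, ∑ c, -(r a b c * Real.log (pab a b)))
          + ∑ a, ∑ c, -(r a b c * Real.log (pbc b c)) := (hmerge _ _).symm

end ShearerAux

/-- Fractional Shearer's lemma: if `α` is a fractional covering of `[1:n]` with respect
to a family `P` of subsets of `[1:n]`, then
`H(X_{[1:n]}) ≤ Σ_{S ∈ P} α(S) H(X_S)`. -/
theorem fractional_shearer (n : ℕ) {Ω 𝒳 : Type*} [Fintype Ω] [Fintype 𝒳] [DecidableEq 𝒳]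
    (p : Ω → ℝ) (hp0 : ∀ ω, 0 ≤ p ω) (hp1 : ∑ ω, p ω = 1)
    (X : Fin n → Ω → 𝒳)
    (P : Finset (Finset (Fin n))) (a : Finset (Fin n) → ℚ)
    (ha0 : ∀ S, 0 ≤ a S)
    (hcov : ∀ i : Fin n, 1 ≤ ∑ S ∈ P.filter (fun S => i ∈ S), a S) :
    ent p (fun ω => fun i : Fin n => X i ω) ≤
      ∑ S ∈ P, (a S : ℝ) * ent p (fun ω => fun i : {i // i ∈ S} => X i.1 ω) := by
  classical
  -- the conditional-entropy increments along the natural order of `Fin n`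
  set c : Fin n → ℝ := fun i =>
    ent p (fun ω => fun j : {j // j ∈ insert i (Finset.Iio i)} => X j.1 ω)
      - ent p (fun ω => fun j : {j // j ∈ Finset.Iio i} => X j.1 ω) with hc
  -- splitting off one coordinate
  have H1 : ∀ (S : Finset (Fin n)) (i : Fin n),
      ent p (fun ω => fun j : {j // j ∈ insert i S} => X j.1 ω)
        = ent p (fun ω => (X i ω, fun j : {j // j ∈ S} => X j.1 ω)) := by
    intro S i
    apply ent_congr
    intro ω ω'
    simp only [funext_iff, Prod.mk.injEq, Subtype.forall, Finset.mem_insert]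
    constructor
    · intro hq
      exact ⟨hq i (Or.inl rfl), fun j hj => hq j (Or.inr hj)⟩
    · rintro ⟨h1, h2⟩ j (rfl | hj)
      · exact h1
      · exact h2 j hj
  -- conditioning on more variables decreases conditional entropy
  have L2 : ∀ (i : Fin n) (T U : Finset (Fin n)), T ⊆ U →
      ent p (fun ω => (X i ω, fun j : {j // j ∈ U} => X j.1 ω))
          - ent p (fun ω => fun j : {j // j ∈ U} => X j.1 ω)
        ≤ ent p (fun ω => (X i ω, fun j : {j // j ∈ T} => X j.1 ω))
          - ent p (fun ω => fun j : {j // j ∈ T} => X j.1 ω) := by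
    intro i T U hTU
    have hUsplit : ∀ ω ω' : Ω,
        (fun j : {j // j ∈ U} => X j.1 ω) = (fun j => X j.1 ω') ↔
          ((fun j : {j // j ∈ T} => X j.1 ω) = (fun j => X j.1 ω') ∧
            (fun j : {j // j ∈ U \ T} => X j.1 ω) = (fun j => X j.1 ω')) := by
      intro ω ω'
      simp only [funext_iff, Subtype.forall, Finset.mem_sdiff]
      constructor
      · intro h2
        exact ⟨fun j hj => h2 j (hTU hj), fun j hj => h2 j hj.1⟩
      · rintro ⟨h2, h3⟩ j hj
        by_cases hjT : j ∈ T
        · exact h2 j hjT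
        · exact h3 j ⟨hj, hjT⟩
    have e1 : ent p (fun ω => (X i ω, fun j : {j // j ∈ U} => X j.1 ω))
        = ent p (fun ω => (X i ω, (fun j : {j // j ∈ T} => X j.1 ω),
            (fun j : {j // j ∈ U \ T} => X j.1 ω))) := by
      apply ent_congr
      intro ω ω'
      simp only [Prod.mk.injEq]
      rw [hUsplit ω ω']
    have e2 : ent p (fun ω => fun j : {j // j ∈ U} => X j.1 ω)
        = ent p (fun ω => ((fun j : {j // j ∈ T} => X j.1 ω),
            (fun j : {j // j ∈ U \ T} => X j.1 ω))) := by
      apply ent_congr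
      intro ω ω'
      simp only [Prod.mk.injEq]
      exact hUsplit ω ω'
    rw [e1, e2]
    have hsub := ent_submod (α := 𝒳) hp0 (fun ω => X i ω)
      (fun ω => fun j : {j // j ∈ T} => X j.1 ω)
      (fun ω => fun j : {j // j ∈ U \ T} => X j.1 ω)
    linarith
  -- nonnegativity of the increments
  have hc0 : ∀ i, 0 ≤ c i := by
    intro i
    rw [hc]
    have := ent_snd_le hp0 (fun ω => X i ω)
      (fun ω => fun j : {j // j ∈ Finset.Iio i} => X j.1 ω)
    rw [← H1 (Finset.Iio i) i] at this
    simp only [sub_nonneg]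
    exact this
  -- entropy of the empty tuple
  have hent_empty : ent p (fun ω => fun j : {j // j ∈ (∅ : Finset (Fin n))} => X j.1 ω) = 0 := by
    haveI : IsEmpty {j // j ∈ (∅ : Finset (Fin n))} :=
      ⟨fun x => (Finset.notMem_empty _ x.2)⟩
    exact ent_of_subsingleton hp1 _
  -- lower bound: `Σ_{i ∈ S} c i ≤ H(X_S)`
  have lower : ∀ S : Finset (Fin n),
      ∑ i ∈ S, c i ≤ ent p (fun ω => fun j : {j // j ∈ S} => X j.1 ω) := by
    intro S
    induction S using Finset.strongInduction with
    | _ S ih =>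
      rcases Finset.eq_empty_or_nonempty S with rfl | hS
      · rw [Finset.sum_empty, hent_empty]
      · set i := S.max' hS with hi
        have hiS : i ∈ S := S.max'_mem hS
        have hsub : S.erase i ⊆ Finset.Iio i := by
          intro j hj
          rw [Finset.mem_Iio]
          exact lt_of_le_of_ne (S.le_max' j (Finset.mem_of_mem_erase hj))
            (Finset.ne_of_mem_erase hj)
        have hrec := ih (S.erase i) (Finset.erase_ssubset hiS)
        have hL2 := L2 i (S.erase i) (Finset.Iio i) hsub
        have hci : c i = ent p (fun ω => (X i ω, fun j : {j // j ∈ Finset.Iio i} => X j.1 ω))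
            - ent p (fun ω => fun j : {j // j ∈ Finset.Iio i} => X j.1 ω) := by
          simp only [hc]
          rw [H1]
        have hSins : S = insert i (S.erase i) := (Finset.insert_erase hiS).symm
        have hentS : ent p (fun ω => fun j : {j // j ∈ S} => X j.1 ω)
            = ent p (fun ω => (X i ω, fun j : {j // j ∈ S.erase i} => X j.1 ω)) := by
          conv_lhs => rw [hSins]
          exact H1 _ i
        calc ∑ j ∈ S, c j = c i + ∑ j ∈ S.erase i, c j := (Finset.add_sum_erase S c hiS).symm
          _ ≤ (ent p (fun ω => (X i ω, fun j : {j // j ∈ S.erase i} => X j.1 ω))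
                - ent p (fun ω => fun j : {j // j ∈ S.erase i} => X j.1 ω))
              + ent p (fun ω => fun j : {j // j ∈ S.erase i} => X j.1 ω) := by
            rw [hci]
            linarith
          _ = ent p (fun ω => fun j : {j // j ∈ S} => X j.1 ω) := by
            rw [hentS]
            ring
  -- upper bound for lower (downward-closed) sets, by induction
  have upper : ∀ S : Finset (Fin n), (∀ i ∈ S, ∀ j : Fin n, j ≤ i → j ∈ S) →
      ent p (fun ω => fun j : {j // j ∈ S} => X j.1 ω) ≤ ∑ i ∈ S, c i := by
    intro S
    induction S using Finset.strongInduction with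
    | _ S ih =>
      intro hlow
      rcases Finset.eq_empty_or_nonempty S with rfl | hS
      · rw [Finset.sum_empty, hent_empty]
      · set i := S.max' hS with hi
        have hiS : i ∈ S := S.max'_mem hS
        have herase : S.erase i = Finset.Iio i := by
          ext j
          rw [Finset.mem_Iio]
          constructor
          · intro hj
            exact lt_of_le_of_ne (S.le_max' j (Finset.mem_of_mem_erase hj))
              (Finset.ne_of_mem_erase hj)
          · intro hj
            exact Finset.mem_erase.mpr ⟨ne_of_lt hj, hlow i hiS j (le_of_lt hj)⟩
        have hSins : S = insert i (Finset.Iio i) := by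
          rw [← herase, Finset.insert_erase hiS]
        have hentS : ent p (fun ω => fun j : {j // j ∈ S} => X j.1 ω)
            = ent p (fun ω => fun j : {j // j ∈ insert i (Finset.Iio i)} => X j.1 ω) := by
          apply ent_congr
          intro ω ω'
          simp only [funext_iff, Subtype.forall, ← hSins]
        have hrec : ent p (fun ω => fun j : {j // j ∈ Finset.Iio i} => X j.1 ω)
            ≤ ∑ j ∈ Finset.Iio i, c j := by
          rw [← herase]
          refine ih (S.erase i) (Finset.erase_ssubset hiS) ?_
          intro x hx j hj
          rw [herase, Finset.mem_Iio] at hx ⊢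
          exact lt_of_le_of_lt hj hx
        have hsum : ∑ j ∈ S, c j = c i + ∑ j ∈ Finset.Iio i, c j := by
          rw [hSins, Finset.sum_insert (by simp)]
        calc ent p (fun ω => fun j : {j // j ∈ S} => X j.1 ω)
            = ent p (fun ω => fun j : {j // j ∈ insert i (Finset.Iio i)} => X j.1 ω) := hentS
          _ = c i + ent p (fun ω => fun j : {j // j ∈ Finset.Iio i} => X j.1 ω) := by
              simp only [hc]
              ring
          _ ≤ c i + ∑ j ∈ Finset.Iio i, c j := by linarith [hrec]
          _ = ∑ j ∈ S, c j := hsum.symm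
  -- the full tuple vs. the `univ`-indexed tuple
  have hfull : ent p (fun ω => fun i : Fin n => X i ω)
      = ent p (fun ω => fun j : {j // j ∈ (Finset.univ : Finset (Fin n))} => X j.1 ω) := by
    apply ent_congr
    intro ω ω'
    simp only [funext_iff, Subtype.forall]
    constructor
    · intro hq j _
      exact hq j
    · intro hq j
      exact hq j (Finset.mem_univ j)
  have main : ent p (fun ω => fun i : Fin n => X i ω) ≤ ∑ i : Fin n, c i := by
    rw [hfull]
    exact upper Finset.univ (fun i _ j _ => Finset.mem_univ j)
  have hcovR : ∀ i : Fin n, (1:ℝ) ≤ ∑ S ∈ P.filter (fun S => i ∈ S), (a S : ℝ) := by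
    intro i
    have h := hcov i
    exact_mod_cast h
  have ha0R : ∀ S, (0:ℝ) ≤ (a S : ℝ) := fun S => by exact_mod_cast ha0 S
  calc ent p (fun ω => fun i : Fin n => X i ω) ≤ ∑ i : Fin n, c i := main
    _ ≤ ∑ i : Fin n, (∑ S ∈ P.filter (fun S => i ∈ S), (a S : ℝ)) * c i := by
        refine Finset.sum_le_sum fun i _ => ?_
        exact le_mul_of_one_le_left (hc0 i) (hcovR i)
    _ = ∑ i : Fin n, ∑ S ∈ P.filter (fun S => i ∈ S), (a S : ℝ) * c i := by
        refine Finset.sum_congr rfl fun i _ => ?_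
        rw [Finset.sum_mul]
    _ = ∑ i : Fin n, ∑ S ∈ P, if i ∈ S then (a S : ℝ) * c i else 0 := by
        refine Finset.sum_congr rfl fun i _ => ?_
        rw [Finset.sum_filter]
    _ = ∑ S ∈ P, ∑ i : Fin n, if i ∈ S then (a S : ℝ) * c i else 0 := Finset.sum_comm
    _ = ∑ S ∈ P, (a S : ℝ) * ∑ i ∈ S, c i := by
        refine Finset.sum_congr rfl fun S _ => ?_
        rw [Finset.sum_ite_mem, Finset.univ_inter, Finset.mul_sum]
    _ ≤ ∑ S ∈ P, (a S : ℝ) * ent p (fun ω => fun i : {i // i ∈ S} => X i.1 ω) := by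
        refine Finset.sum_le_sum fun S _ => ?_
        exact mul_le_mul_of_nonneg_left (lower S) (ha0R S)
end

section
/- For the linear program maximize 1^T y subject to B^T y ≤ 1 and y ≥ 0, where B is the N × N incidence matrix of the cyclically T-contiguous collusion pattern (each column is the indicator of a cyclic interval of length T in Z_N), the optimal value is N/T, attained by y_i = 1/T for all i. -/
lemma cycInt_filter_card (N T : ℕ) [NeZero N] (hTN : T ≤ N) (n : ZMod N) :
    (Finset.univ.filter (fun m => n ∈ cycInt N T m)).card = T := by
  have heq : Finset.univ.filter (fun m => n ∈ cycInt N T m)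
      = (Finset.range T).image (fun t : ℕ => n - (t : ZMod N)) := by
    ext m
    simp only [Finset.mem_filter, Finset.mem_univ, true_and, cycInt, Finset.mem_image,
      Finset.mem_range]
    constructor
    · rintro ⟨t, ht, rfl⟩
      exact ⟨t, ht, by ring⟩
    · rintro ⟨t, ht, rfl⟩
      exact ⟨t, ht, by ring⟩
  rw [heq, Finset.card_image_of_injOn, Finset.card_range]
  intro a ha b hb hab
  simp only [Finset.coe_range, Set.mem_Iio] at ha hb
  have : (a : ZMod N) = b := by
    have := sub_right_injective hab
    exact this
  have ha' : a < N := lt_of_lt_of_le ha hTN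
  have hb' : b < N := lt_of_lt_of_le hb hTN
  calc a = (a : ZMod N).val := (ZMod.val_cast_of_lt ha').symm
    _ = (b : ZMod N).val := by rw [this]
    _ = b := ZMod.val_cast_of_lt hb'

/-- For the LP `max 1ᵀy s.t. Bᵀy ≤ 1, y ≥ 0` with `B` the incidence matrix of the
cyclically `T`-contiguous collusion pattern on `Z_N`, the optimal value is `N/T`,
attained by `y_i = 1/T` for all `i`. -/
theorem lp_cyclic_contiguous_optimal (N T : ℕ) [NeZero N] (hT : 1 ≤ T) (hTN : T ≤ N) :
    (∀ m : ZMod N, ∑ _n ∈ cycInt N T m, (1 : ℝ) / T ≤ 1) ∧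
    (∑ _n : ZMod N, (1 : ℝ) / T) = (N : ℝ) / T ∧
    (∀ y : ZMod N → ℝ, (∀ n, 0 ≤ y n) →
      (∀ m : ZMod N, ∑ n ∈ cycInt N T m, y n ≤ 1) →
      (∑ n : ZMod N, y n) ≤ (N : ℝ) / T) := by
  have hT0 : (0 : ℝ) < T := by exact_mod_cast hT
  refine ⟨?_, ?_, ?_⟩
  · intro m
    rw [Finset.sum_const, nsmul_eq_mul]
    have hcard : ((cycInt N T m).card : ℝ) ≤ T := by
      exact_mod_cast (Finset.card_image_le.trans_eq (Finset.card_range T))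
    calc ((cycInt N T m).card : ℝ) * (1 / T) ≤ T * (1 / T) := by
          apply mul_le_mul_of_nonneg_right hcard; positivity
      _ = 1 := by field_simp
  · rw [Finset.sum_const, nsmul_eq_mul, Finset.card_univ, ZMod.card]
    field_simp
  · intro y hy hcon
    have key : ∑ m : ZMod N, ∑ n ∈ cycInt N T m, y n = T * ∑ n : ZMod N, y n := by
      have h1 : ∀ m : ZMod N, ∑ n ∈ cycInt N T m, y n
          = ∑ n : ZMod N, if n ∈ cycInt N T m then y n else 0 := by
        intro m
        rw [Finset.sum_ite_mem, Finset.univ_inter]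
      simp_rw [h1]
      rw [Finset.sum_comm]
      have h2 : ∀ n : ZMod N, (∑ m : ZMod N, if n ∈ cycInt N T m then y n else 0)
          = T * y n := by
        intro n
        rw [← Finset.sum_filter, Finset.sum_const, nsmul_eq_mul,
          cycInt_filter_card N T hTN n]
      simp_rw [h2, ← Finset.mul_sum]
    have hbound : ∑ m : ZMod N, ∑ n ∈ cycInt N T m, y n ≤ (N : ℝ) := by
      calc ∑ m : ZMod N, ∑ n ∈ cycInt N T m, y n ≤ ∑ _m : ZMod N, (1 : ℝ) :=
            Finset.sum_le_sum fun m _ => hcon m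
        _ = (N : ℝ) := by
            rw [Finset.sum_const, nsmul_eq_mul, Finset.card_univ, ZMod.card, mul_one]
    rw [key] at hbound
    rw [le_div_iff₀ hT0, mul_comm]
    exact hbound
end

section
/- In the disjoint (N_1,...,N_M; T_1,...,T_M)-collusion setting, any hitting set H for the family F_1 ∪ F_2 (Type 1: |S ∩ P_i| ≥ T_i + 1 for some i; Type 2: |S ∩ P_j| ≥ T_j and |S ∩ P_k| ≥ T_k for distinct j,k) must satisfy |H ∩ P_i| ≥ N_i - T_i for every i, and |H ∩ P_i| = N_i - T_i can hold for at most one index i. -/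
/-- In the disjoint `(N_1,...,N_M; T_1,...,T_M)`-collusion setting, any hitting set `H`
for the family of Type 1 sets (`|S ∩ P i| ≥ T i + 1` for some `i`) and Type 2 sets
(`|S ∩ P j| ≥ T j` and `|S ∩ P k| ≥ T k` for distinct `j, k`) satisfies
`|H ∩ P i| ≥ N i - T i` for every `i`, and equality `|H ∩ P i| = N i - T i` can hold for
at most one index `i`. -/
theorem disjoint_collusion_hitting_lower_bound_steps (N M : ℕ) (hM : 2 ≤ M)
    (P : Fin M → Finset (Fin N)) (Nc T : Fin M → ℕ)
    (hdisj : ∀ i j : Fin M, i ≠ j → Disjoint (P i) (P j))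
    (hcover : Finset.univ.biUnion P = (Finset.univ : Finset (Fin N)))
    (hcard : ∀ i, (P i).card = Nc i)
    (hT1 : ∀ i, 1 ≤ T i) (hTN : ∀ i, T i ≤ Nc i)
    (H : Finset (Fin N))
    (hhit : ∀ S : Finset (Fin N),
      ((∃ i, T i + 1 ≤ (S ∩ P i).card) ∨
       (∃ j k, j ≠ k ∧ T j ≤ (S ∩ P j).card ∧ T k ≤ (S ∩ P k).card)) →
      (S ∩ H).Nonempty) :
    (∀ i : Fin M, Nc i - T i ≤ (H ∩ P i).card) ∧
    (Finset.univ.filter (fun i : Fin M => (H ∩ P i).card = Nc i - T i)).card ≤ 1 := by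
  have hsd : ∀ i : Fin M, (P i \ H).card = Nc i - (H ∩ P i).card := by
    intro i
    have h1 : (P i \ H).card + (P i ∩ H).card = (P i).card :=
      Finset.card_sdiff_add_card_inter (P i) H
    rw [Finset.inter_comm] at h1
    have := hcard i
    omega
  -- Part 1
  have part1 : ∀ i : Fin M, Nc i - T i ≤ (H ∩ P i).card := by
    intro i
    by_contra hlt
    push_neg at hlt
    set S := P i \ H with hS
    have hSP : S ∩ P i = S := Finset.inter_eq_left.mpr (Finset.sdiff_subset.trans le_rfl)
    have hcardS : T i + 1 ≤ (S ∩ P i).card := by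
      rw [hSP, hsd i]
      have := hTN i
      omega
    have hne := hhit S (Or.inl ⟨i, hcardS⟩)
    have : S ∩ H = ∅ := Finset.sdiff_inter_self _ _
    rw [this] at hne
    exact Finset.not_nonempty_empty hne
  refine ⟨part1, ?_⟩
  -- Part 2
  rw [Finset.card_le_one]
  intro j hj k hk
  simp only [Finset.mem_filter] at hj hk
  by_contra hjk
  set S := (P j \ H) ∪ (P k \ H) with hS
  have hinter : ∀ l m : Fin M, l ≠ m → (P m \ H) ∩ P l = ∅ := by
    intro l m hlm
    apply Finset.eq_empty_of_forall_notMem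
    intro x hx
    simp only [Finset.mem_inter, Finset.mem_sdiff] at hx
    exact (hdisj m l (fun h => hlm h.symm)).forall_ne_finset hx.1.1 hx.2 rfl
  have hSj : S ∩ P j = P j \ H := by
    rw [hS, Finset.union_inter_distrib_right, hinter j k hjk,
      Finset.inter_eq_left.mpr Finset.sdiff_subset, Finset.union_empty]
  have hSk : S ∩ P k = P k \ H := by
    rw [hS, Finset.union_inter_distrib_right, hinter k j (Ne.symm hjk),
      Finset.inter_eq_left.mpr Finset.sdiff_subset, Finset.empty_union]
  have hcj : T j ≤ (S ∩ P j).card := by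
    rw [hSj, hsd j, hj.2]; have := hTN j; omega
  have hck : T k ≤ (S ∩ P k).card := by
    rw [hSk, hsd k, hk.2]; have := hTN k; omega
  have hne := hhit S (Or.inr ⟨j, k, hjk, hcj, hck⟩)
  have : S ∩ H = ∅ := by
    rw [hS, Finset.union_inter_distrib_right, Finset.sdiff_inter_self,
      Finset.sdiff_inter_self, Finset.union_empty]
  rw [this] at hne
  exact Finset.not_nonempty_empty hne
end

section
/- In the disjoint (N_1,...,N_M; T_1,...,T_M)-collusion setting with M ≥ 2, the set H consisting of exactly N_1 - T_1 elements of P_1 and exactly N_j - T_j + 1 elements of P_j for each j ≥ 2 is a hitting set for the family F_1 ∪ F_2 (Type 1 and Type 2 sets), and |H| = Σ_{j=1}^M (N_j - T_j) + (M - 1). -/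
/-- In the disjoint `(N_1,...,N_M; T_1,...,T_M)`-collusion setting with `M ≥ 2`, a set
`H` containing exactly `N i₀ - T i₀` elements of the distinguished group `P i₀` and
exactly `N j - T j + 1` elements of `P j` for every other `j` is a hitting set for the
family of Type 1 and Type 2 sets, and `|H| = Σ_j (N j - T j) + (M - 1)`. -/
theorem disjoint_collusion_hitting_upper_bound (N M : ℕ) (hM : 2 ≤ M)
    (P : Fin M → Finset (Fin N)) (Nc T : Fin M → ℕ)
    (hdisj : ∀ i j : Fin M, i ≠ j → Disjoint (P i) (P j))
    (hcover : Finset.univ.biUnion P = (Finset.univ : Finset (Fin N)))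
    (hcard : ∀ i, (P i).card = Nc i)
    (hT1 : ∀ i, 1 ≤ T i) (hTN : ∀ i, T i ≤ Nc i)
    (i₀ : Fin M) (H : Finset (Fin N))
    (hH0 : (H ∩ P i₀).card = Nc i₀ - T i₀)
    (hHj : ∀ j : Fin M, j ≠ i₀ → (H ∩ P j).card = Nc j - T j + 1) :
    (∀ S : Finset (Fin N),
      ((∃ i, T i + 1 ≤ (S ∩ P i).card) ∨
       (∃ j k, j ≠ k ∧ T j ≤ (S ∩ P j).card ∧ T k ≤ (S ∩ P k).card)) →
      (S ∩ H).Nonempty) ∧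
    H.card = ∑ j, (Nc j - T j) + (M - 1) := by
  have key : ∀ (i : Fin M) (S : Finset (Fin N)),
      (P i).card < (S ∩ P i).card + (H ∩ P i).card → (S ∩ H).Nonempty := by
    intro i S h
    have hsub : (S ∩ P i) ∪ (H ∩ P i) ⊆ P i := by
      intro x hx
      simp only [Finset.mem_union, Finset.mem_inter] at hx
      tauto
    have hle := Finset.card_le_card hsub
    have huv := Finset.card_union_add_card_inter (S ∩ P i) (H ∩ P i)
    have hpos : 0 < ((S ∩ P i) ∩ (H ∩ P i)).card := by omega
    obtain ⟨x, hx⟩ := Finset.card_pos.mp hpos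
    simp only [Finset.mem_inter] at hx
    exact ⟨x, Finset.mem_inter.mpr ⟨hx.1.1, hx.2.1⟩⟩
  constructor
  · rintro S (⟨i, hi⟩ | ⟨j, k, hjk, hj, hk⟩)
    · apply key i S
      have hHi : Nc i - T i ≤ (H ∩ P i).card := by
        by_cases h : i = i₀
        · subst h; omega
        · have := hHj i h; omega
      have := hTN i; have := hT1 i; have := hcard i
      omega
    · rcases ne_or_eq j i₀ with h | h
      · apply key j S
        have := hHj j h; have := hTN j; have := hT1 j; have := hcard j
        omega
      · have hk0 : k ≠ i₀ := by subst h; exact fun hc => hjk hc.symm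
        apply key k S
        have := hHj k hk0; have := hTN k; have := hT1 k; have := hcard k
        omega
  · have hx : ∀ x : Fin N, ∃ j, x ∈ P j := by
      intro x
      have : x ∈ Finset.univ.biUnion P := hcover ▸ Finset.mem_univ x
      simpa using this
    have hHeq : H = Finset.univ.biUnion (fun j => H ∩ P j) := by
      ext x
      simp only [Finset.mem_biUnion, Finset.mem_univ, Finset.mem_inter, true_and]
      constructor
      · intro hxH
        obtain ⟨j, hj⟩ := hx x
        exact ⟨j, hxH, hj⟩
      · rintro ⟨j, hj, _⟩; exact hj
    have hcardH : H.card = ∑ j, (H ∩ P j).card := by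
      conv_lhs => rw [hHeq]
      exact Finset.card_biUnion (fun a _ b _ hab =>
        Finset.disjoint_of_subset_left Finset.inter_subset_right
          (Finset.disjoint_of_subset_right Finset.inter_subset_right (hdisj a b hab)))
    rw [hcardH]
    have hsplit := Fintype.sum_eq_add_sum_compl i₀ (fun j => (H ∩ P j).card)
    have hsplit2 := Fintype.sum_eq_add_sum_compl i₀ (fun j => Nc j - T j)
    have hcompl : ∑ j ∈ ({i₀} : Finset (Fin M))ᶜ, (H ∩ P j).card
        = ∑ j ∈ ({i₀} : Finset (Fin M))ᶜ, ((Nc j - T j) + 1) := by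
      apply Finset.sum_congr rfl
      intro j hj
      simp only [Finset.mem_compl, Finset.mem_singleton] at hj
      exact hHj j hj
    have hcc : (({i₀} : Finset (Fin M))ᶜ).card = M - 1 := by
      rw [Finset.card_compl]
      simp
    rw [hsplit, hH0, hcompl, Finset.sum_add_distrib, Finset.sum_const, hcc, hsplit2]
    simp only [smul_eq_mul, mul_one]
    omega
end
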